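/- arXiv:2008.10403 — 2 statements merged into one kernel-verified Lean document; each statement's English description precedes it below -/
import Mathlib

section
/- Let n ≥ 1, let ∼ be a symmetric relation on {1,…,n}, let Φ be the associated disconnection indicator on nonempty subsets of {1,…,n}, and let φ be the cumulant family of Φ. Then φ({1,…,n}) = ∑_G ∏_{{i,j} ∈ E(G)} (−1_{i∼j}), where the sum ranges over all connected graphs G on the vertex set {1,…,n}; equivalently, φ({1,…,n}) = ∑_G (−1)^{|E(G)|}, the sum ranging over all connected graphs G on {1,…,n} all of whose edges {i,j} satisfy i ∼ j. -/
/-!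
Statement 1: let `∼` be a symmetric relation on `{1,…,n}` (`n ≥ 1`), `Φ` the associated
disconnection indicator on nonempty subsets, and `φ` its cumulant family.  Then
`φ({1,…,n}) = ∑_G (−1)^{|E(G)|}`, the sum ranging over all connected graphs `G` on `{1,…,n}`
all of whose edges `{i,j}` satisfy `i ∼ j`.
-/

open Finset

open scoped Classical

/-- The set partitions of a finite set `S` into nonempty blocks, encoded as finsets of blocks. -/
noncomputable def setPartitions {α : Type*} [DecidableEq α] (S : Finset α) :
    Finset (Finset (Finset α)) :=
  S.powerset.powerset.filter fun P =>
    (∀ B ∈ P, B.Nonempty) ∧ (∀ B ∈ P, ∀ B' ∈ P, B ≠ B' → Disjoint B B') ∧ P.sup id = S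

/-- The cumulant family associated to a function on subsets. -/
noncomputable def cumulantFamily {α : Type*} [DecidableEq α] (a : Finset α → ℝ)
    (S : Finset α) : ℝ :=
  ∑ P ∈ setPartitions S,
    (-1 : ℝ) ^ (P.card - 1) * (Nat.factorial (P.card - 1)) * ∏ B ∈ P, a B

/-- The disconnection indicator of a relation `r`: `Φ(S) = 1` iff no two distinct elements of
`S` are related by `r`. -/
noncomputable def disconnectionIndicator {n : ℕ} (r : Fin n → Fin n → Prop)
    (S : Finset (Fin n)) : ℝ :=
  if ∀ i ∈ S, ∀ j ∈ S, i ≠ j → ¬r i j then 1 else 0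

variable {α : Type*} [DecidableEq α]

lemma mem_setPartitions {S : Finset α} {P : Finset (Finset α)} :
    P ∈ setPartitions S ↔
      (∀ B ∈ P, B.Nonempty) ∧ (∀ B ∈ P, ∀ B' ∈ P, B ≠ B' → Disjoint B B') ∧ P.sup id = S := by
  unfold setPartitions
  simp only [mem_filter, mem_powerset, and_iff_right_iff_imp]
  rintro ⟨-, -, hsup⟩ B hB
  rw [mem_powerset]
  intro x hx
  rw [← hsup]
  exact mem_sup.2 ⟨B, hB, hx⟩

lemma setPartitions_empty : setPartitions (∅ : Finset α) = {∅} := by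
  ext P
  simp only [mem_setPartitions, mem_singleton]
  constructor
  · rintro ⟨hne, -, hsup⟩
    by_contra hP
    obtain ⟨B, hB⟩ := nonempty_iff_ne_empty.2 hP
    obtain ⟨x, hx⟩ := hne B hB
    have : x ∈ P.sup id := mem_sup.2 ⟨B, hB, hx⟩
    simp [hsup] at this
  · rintro rfl
    simp

lemma block_subset {S : Finset α} {P : Finset (Finset α)} (hP : P ∈ setPartitions S)
    {B : Finset α} (hB : B ∈ P) : B ⊆ S := by
  obtain ⟨-, -, hsup⟩ := mem_setPartitions.1 hP
  intro x hx; rw [← hsup]; exact mem_sup.2 ⟨B, hB, hx⟩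

lemma exists_block {S : Finset α} {P : Finset (Finset α)} (hP : P ∈ setPartitions S)
    {x : α} (hx : x ∈ S) : ∃ B ∈ P, x ∈ B := by
  obtain ⟨-, -, hsup⟩ := mem_setPartitions.1 hP
  rw [← hsup] at hx
  simpa using mem_sup.1 hx

lemma block_unique {S : Finset α} {P : Finset (Finset α)} (hP : P ∈ setPartitions S)
    {B B' : Finset α} (hB : B ∈ P) (hB' : B' ∈ P) {x : α} (hx : x ∈ B) (hx' : x ∈ B') :
    B = B' := by
  obtain ⟨-, hdisj, -⟩ := mem_setPartitions.1 hP
  by_contra h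
  exact absurd hx' (Finset.disjoint_left.1 (hdisj B hB B' hB' h) hx)

lemma insert_mem_setPartitions {S B : Finset α} (hBne : B.Nonempty) (hBS : B ⊆ S)
    {P : Finset (Finset α)} (hP : P ∈ setPartitions (S \ B)) :
    insert B P ∈ setPartitions S ∧ B ∉ P := by
  obtain ⟨hne, hdisj, hsup⟩ := mem_setPartitions.1 hP
  have hBP : B ∉ P := by
    intro hBP
    obtain ⟨x, hx⟩ := hBne
    have := block_subset hP hBP hx
    simp at this
    exact this.2 hx
  refine ⟨mem_setPartitions.2 ⟨?_, ?_, ?_⟩, hBP⟩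
  · rintro C hC
    rcases mem_insert.1 hC with rfl | hC
    · exact hBne
    · exact hne C hC
  · have hd : ∀ C ∈ P, Disjoint B C := by
      intro C hC
      exact Finset.disjoint_left.2 fun x hx hx' => by
        have := block_subset hP hC hx'
        simp at this
        exact this.2 hx
    rintro C hC C' hC' hne'
    rcases mem_insert.1 hC with h1 | h1 <;> rcases mem_insert.1 hC' with h2 | h2
    · exact absurd (h1.trans h2.symm) hne'
    · exact h1 ▸ hd C' h2
    · exact h2 ▸ (hd C h1).symm
    · exact hdisj C h1 C' h2 hne'
  · rw [Finset.sup_insert, hsup]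
    simp only [id]
    rw [Finset.sup_eq_union]
    exact (Finset.union_sdiff_of_subset hBS)

lemma erase_mem_setPartitions {S : Finset α} {P : Finset (Finset α)}
    (hP : P ∈ setPartitions S) {B : Finset α} (hB : B ∈ P) :
    P.erase B ∈ setPartitions (S \ B) := by
  obtain ⟨hne, hdisj, hsup⟩ := mem_setPartitions.1 hP
  refine mem_setPartitions.2 ⟨?_, ?_, ?_⟩
  · exact fun C hC => hne C (mem_of_mem_erase hC)
  · exact fun C hC C' hC' h => hdisj C (mem_of_mem_erase hC) C' (mem_of_mem_erase hC') h
  · ext x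
    simp only [mem_sup, mem_erase, id, mem_sdiff]
    constructor
    · rintro ⟨C, ⟨hCB, hC⟩, hx⟩
      refine ⟨by rw [← hsup]; exact mem_sup.2 ⟨C, hC, hx⟩, fun hxB => ?_⟩
      exact hCB (block_unique hP hC hB hx hxB)
    · rintro ⟨hxS, hxB⟩
      obtain ⟨C, hC, hx⟩ := exists_block hP hxS
      refine ⟨C, ⟨fun h => hxB (h ▸ hx), hC⟩, hx⟩

lemma card_pos_of_mem_setPartitions {S : Finset α} (hS : S.Nonempty)
    {P : Finset (Finset α)} (hP : P ∈ setPartitions S) : 1 ≤ P.card := by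
  obtain ⟨x, hx⟩ := hS
  obtain ⟨B, hB, -⟩ := exists_block hP hx
  exact card_pos.2 ⟨B, hB⟩

/-- Recursion over all blocks. -/
lemma sum_setPartitions_mul_card (S : Finset α) (u : ℕ → ℝ) :
    ∑ P ∈ setPartitions S, (P.card : ℝ) * u P.card
      = ∑ B ∈ S.powerset.filter Finset.Nonempty,
          ∑ P ∈ setPartitions (S \ B), u (P.card + 1) := by
  have l1 : ∀ P ∈ setPartitions S, (P.card : ℝ) * u P.card = ∑ B ∈ P, u P.card := by
    intro P hP
    rw [Finset.sum_const, nsmul_eq_mul]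
  rw [Finset.sum_congr rfl l1, Finset.sum_sigma', Finset.sum_sigma']
  refine Finset.sum_bij' (fun x _ => (⟨x.2, x.1.erase x.2⟩ : Σ _ : Finset α, Finset (Finset α)))
    (fun x _ => (⟨insert x.1 x.2, x.1⟩ : Σ _ : Finset (Finset α), Finset α)) ?_ ?_ ?_ ?_ ?_
  · rintro ⟨P, B⟩ hx
    simp only [Finset.mem_sigma] at hx ⊢
    obtain ⟨hP, hB⟩ := hx
    refine ⟨Finset.mem_filter.2 ⟨Finset.mem_powerset.2 (block_subset hP hB),
      (mem_setPartitions.1 hP).1 B hB⟩, erase_mem_setPartitions hP hB⟩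
  · rintro ⟨B, P⟩ hx
    simp only [Finset.mem_sigma, Finset.mem_filter, Finset.mem_powerset] at hx ⊢
    obtain ⟨⟨hBS, hBne⟩, hP⟩ := hx
    exact ⟨(insert_mem_setPartitions hBne hBS hP).1, Finset.mem_insert_self _ _⟩
  · rintro ⟨P, B⟩ hx
    simp only [Finset.mem_sigma] at hx
    simp only [Sigma.mk.inj_iff, heq_eq_eq]
    exact ⟨Finset.insert_erase hx.2, trivial⟩
  · rintro ⟨B, P⟩ hx
    simp only [Finset.mem_sigma, Finset.mem_filter, Finset.mem_powerset] at hx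
    obtain ⟨⟨hBS, hBne⟩, hP⟩ := hx
    have hBP := (insert_mem_setPartitions hBne hBS hP).2
    simp only [Sigma.mk.inj_iff, heq_eq_eq]
    simp [Finset.erase_insert hBP]
  · rintro ⟨P, B⟩ hx
    simp only [Finset.mem_sigma] at hx
    congr 1
    rw [Finset.card_erase_add_one hx.2]

/-- Recursion over the block containing a fixed element. -/
lemma sum_setPartitions_mem (S : Finset α) {x : α} (hx : x ∈ S) (u : ℕ → ℝ) :
    ∑ P ∈ setPartitions S, u P.card
      = ∑ B ∈ S.powerset.filter (fun B => x ∈ B),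
          ∑ P ∈ setPartitions (S \ B), u (P.card + 1) := by
  have l1 : ∀ P ∈ setPartitions S, u P.card = ∑ B ∈ P.filter (fun B => x ∈ B), u P.card := by
    intro P hP
    obtain ⟨B, hB, hxB⟩ := exists_block hP hx
    have : P.filter (fun B => x ∈ B) = {B} := by
      ext C
      simp only [Finset.mem_filter, Finset.mem_singleton]
      constructor
      · rintro ⟨hC, hxC⟩; exact block_unique hP hC hB hxC hxB
      · rintro rfl; exact ⟨hB, hxB⟩
    rw [this, Finset.sum_singleton]
  rw [Finset.sum_congr rfl l1, Finset.sum_sigma', Finset.sum_sigma']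
  refine Finset.sum_bij' (fun y _ => (⟨y.2, y.1.erase y.2⟩ : Σ _ : Finset α, Finset (Finset α)))
    (fun y _ => (⟨insert y.1 y.2, y.1⟩ : Σ _ : Finset (Finset α), Finset α)) ?_ ?_ ?_ ?_ ?_
  · rintro ⟨P, B⟩ hy
    simp only [Finset.mem_sigma, Finset.mem_filter] at hy ⊢
    obtain ⟨hP, hB, hxB⟩ := hy
    refine ⟨⟨Finset.mem_powerset.2 (block_subset hP hB), hxB⟩, erase_mem_setPartitions hP hB⟩
  · rintro ⟨B, P⟩ hy
    simp only [Finset.mem_sigma, Finset.mem_filter, Finset.mem_powerset] at hy ⊢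
    obtain ⟨⟨hBS, hxB⟩, hP⟩ := hy
    exact ⟨(insert_mem_setPartitions ⟨x, hxB⟩ hBS hP).1,
      Finset.mem_insert_self _ _, hxB⟩
  · rintro ⟨P, B⟩ hy
    simp only [Finset.mem_sigma, Finset.mem_filter] at hy
    simp only [Sigma.mk.inj_iff, heq_eq_eq]
    exact ⟨Finset.insert_erase hy.2.1, trivial⟩
  · rintro ⟨B, P⟩ hy
    simp only [Finset.mem_sigma, Finset.mem_filter, Finset.mem_powerset] at hy
    obtain ⟨⟨hBS, hxB⟩, hP⟩ := hy
    have hBP := (insert_mem_setPartitions ⟨x, hxB⟩ hBS hP).2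
    simp only [Sigma.mk.inj_iff, heq_eq_eq]
    simp [Finset.erase_insert hBP]
  · rintro ⟨P, B⟩ hy
    simp only [Finset.mem_sigma, Finset.mem_filter] at hy
    congr 1
    rw [Finset.card_erase_add_one hy.2.1]

lemma sum_powerset_neg_one_pow_card_real {x : Finset α} :
    (∑ m ∈ x.powerset, (-1 : ℝ) ^ m.card) = if x = ∅ then 1 else 0 := by
  have h := Finset.sum_powerset_neg_one_pow_card (α := α) (x := x)
  have h2 : ((∑ m ∈ x.powerset, (-1:ℤ) ^ m.card : ℤ) : ℝ) = if x = ∅ then 1 else 0 := by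
    rw [h]; split <;> simp
  rw [← h2]; push_cast; rfl

lemma neg_one_pow_sub {m b : ℕ} (h : b ≤ m) : (-1:ℝ)^(m-b) = (-1)^m * (-1)^b := by
  have h1 : (-1:ℝ)^(m-b) * (-1)^b = (-1)^m := by rw [← pow_add, Nat.sub_add_cancel h]
  have h2 : (-1:ℝ)^b * (-1)^b = 1 := by rw [← pow_add, ← two_mul, pow_mul]; norm_num
  calc (-1:ℝ)^(m-b) = (-1)^(m-b) * ((-1)^b * (-1)^b) := by rw [h2, mul_one]
    _ = (-1)^m * (-1)^b := by rw [← mul_assoc, h1]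

lemma sum_neg_pow_factorial (S : Finset α) :
    ∑ P ∈ setPartitions S, (-1:ℝ)^P.card * (Nat.factorial P.card : ℝ) = (-1)^S.card := by
  induction S using Finset.strongInduction with
  | _ S ih =>
    rcases S.eq_empty_or_nonempty with rfl | hS
    · simp [setPartitions_empty]
    · have key : ∀ P ∈ setPartitions S, (-1:ℝ)^P.card * (Nat.factorial P.card : ℝ)
          = (P.card:ℝ) * ((-1)^P.card * (Nat.factorial (P.card - 1) : ℝ)) := by
        intro P hP
        have h1 := card_pos_of_mem_setPartitions hS hP
        obtain ⟨k, hk⟩ : ∃ k, P.card = k + 1 := ⟨P.card - 1, (Nat.succ_pred_eq_of_pos h1).symm⟩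
        rw [hk]
        simp only [Nat.add_sub_cancel, Nat.factorial_succ]
        push_cast
        ring
      rw [Finset.sum_congr rfl key,
        sum_setPartitions_mul_card S (fun k => (-1:ℝ)^k * (Nat.factorial (k-1) : ℝ))]
      have inner : ∀ B ∈ S.powerset.filter Finset.Nonempty,
          (∑ P ∈ setPartitions (S \ B),
            (-1:ℝ)^(P.card+1) * (Nat.factorial (P.card+1-1):ℝ))
            = -((-1:ℝ)^S.card * (-1)^B.card) := by
        intro B hB
        simp only [mem_filter, mem_powerset] at hB
        have hsub : S \ B ⊂ S := by
          obtain ⟨x, hx⟩ := hB.2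
          refine Finset.ssubset_iff_of_subset (Finset.sdiff_subset) |>.2 ⟨x, hB.1 hx, by simp [hx]⟩
        have hih := ih (S \ B) hsub
        have : ∀ P ∈ setPartitions (S \ B),
            (-1:ℝ)^(P.card+1) * (Nat.factorial (P.card+1-1):ℝ)
              = -((-1:ℝ)^P.card * (Nat.factorial P.card : ℝ)) := by
          intro P hP
          simp only [Nat.add_sub_cancel, pow_succ]
          ring
        rw [Finset.sum_congr rfl this, Finset.sum_neg_distrib, hih,
          Finset.card_sdiff_of_subset hB.1, neg_one_pow_sub (Finset.card_le_card hB.1)]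
      rw [Finset.sum_congr rfl inner]
      have hfil : S.powerset.filter Finset.Nonempty = S.powerset.erase ∅ := by
        ext B; simp [Finset.nonempty_iff_ne_empty, and_comm]
      rw [hfil]
      have : ∑ B ∈ S.powerset.erase ∅, -((-1:ℝ)^S.card * (-1)^B.card)
          = -((-1:ℝ)^S.card * ((∑ B ∈ S.powerset, (-1:ℝ)^B.card) - 1)) := by
        rw [Finset.sum_erase_eq_sub (Finset.empty_mem_powerset S), Finset.sum_neg_distrib,
          ← Finset.mul_sum]
        simp only [Finset.card_empty, pow_zero]
        ring
      rw [this, sum_powerset_neg_one_pow_card_real,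
        if_neg (Finset.nonempty_iff_ne_empty.1 hS)]
      ring

lemma setPartitions_singleton (a : α) :
    setPartitions ({a} : Finset α) = {{({a} : Finset α)}} := by
  ext P
  simp only [mem_setPartitions, mem_singleton]
  constructor
  · rintro ⟨hne, hdisj, hsup⟩
    have hblocks : ∀ B ∈ P, B = {a} := by
      intro B hB
      have hsub : B ⊆ {a} := fun y hy => by rw [← hsup]; exact mem_sup.2 ⟨B, hB, hy⟩
      obtain ⟨y, hy⟩ := hne B hB
      have hya : y = a := by simpa using hsub hy
      refine Finset.Subset.antisymm hsub ?_
      intro z hz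
      simp only [Finset.mem_singleton] at hz
      subst hz
      rwa [← hya]
    have ha : a ∈ P.sup id := by rw [hsup]; simp
    obtain ⟨B, hB, haB⟩ := mem_sup.1 ha
    ext C
    simp only [mem_singleton]
    constructor
    · exact hblocks C
    · rintro rfl; rw [← hblocks B hB]; exact hB
  · rintro rfl
    refine ⟨?_, ?_, ?_⟩ <;> simp

lemma sum_moebius (S : Finset α) (hS : S.Nonempty) :
    ∑ P ∈ setPartitions S, (-1:ℝ)^(P.card-1) * (Nat.factorial (P.card-1) : ℝ)
      = if S.card = 1 then 1 else 0 := by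
  rcases eq_or_ne S.card 1 with h1 | h1
  · obtain ⟨a, rfl⟩ := Finset.card_eq_one.1 h1
    rw [setPartitions_singleton, if_pos h1]
    simp
  · rw [if_neg h1]
    obtain ⟨x, hx⟩ := hS
    rw [sum_setPartitions_mem S hx (fun k => (-1:ℝ)^(k-1) * (Nat.factorial (k-1) : ℝ))]
    have inner : ∀ B ∈ S.powerset.filter (fun B => x ∈ B),
        (∑ P ∈ setPartitions (S \ B),
          (-1:ℝ)^(P.card+1-1) * (Nat.factorial (P.card+1-1):ℝ))
          = (-1:ℝ)^S.card * (-1)^B.card := by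
      intro B hB
      simp only [mem_filter, mem_powerset] at hB
      simp only [Nat.add_sub_cancel]
      rw [sum_neg_pow_factorial, Finset.card_sdiff_of_subset hB.1,
        neg_one_pow_sub (Finset.card_le_card hB.1)]
    rw [Finset.sum_congr rfl inner, ← Finset.mul_sum]
    have hxe : (S.erase x).Nonempty := by
      rw [← Finset.card_pos, Finset.card_erase_of_mem hx]
      have h2 : 2 ≤ S.card := by
        have hc1 : 1 ≤ S.card := Finset.card_pos.2 ⟨x, hx⟩
        omega
      omega
    have hsplit : ∑ B ∈ S.powerset.filter (fun B => x ∈ B), (-1:ℝ)^B.card = 0 := by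
      have h0 : ∑ B ∈ S.powerset, (-1:ℝ)^B.card = 0 := by
        rw [sum_powerset_neg_one_pow_card_real,
          if_neg (Finset.nonempty_iff_ne_empty.1 ⟨x, hx⟩)]
      have hnot : S.powerset.filter (fun B => ¬ x ∈ B) = (S.erase x).powerset := by
        ext B
        simp [Finset.subset_erase]
      have h3 : ∑ B ∈ S.powerset.filter (fun B => ¬ x ∈ B), (-1:ℝ)^B.card = 0 := by
        rw [hnot, sum_powerset_neg_one_pow_card_real,
          if_neg (Finset.nonempty_iff_ne_empty.1 hxe)]
      have := Finset.sum_filter_add_sum_filter_not S.powerset (fun B => x ∈ B)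
        (fun B => (-1:ℝ)^B.card)
      rw [h3, h0] at this
      linarith
    rw [hsplit, mul_zero]

section saturated

variable {β : Type*} [Fintype α] [Fintype β] [DecidableEq β] {q : α → β}

lemma sum_saturated (q : α → β) (hq : Function.Surjective q) (u : ℕ → ℝ) :
    ∑ P ∈ setPartitions (univ : Finset α),
        (if ∀ B ∈ P, ∀ x y : α, q x = q y → (x ∈ B ↔ y ∈ B) then u P.card else 0)
      = ∑ Q ∈ setPartitions (univ : Finset β), u Q.card := by
  rw [← Finset.sum_filter]
  have filt_im : ∀ {P : Finset (Finset α)}, P ∈ setPartitions (univ : Finset α) →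
      (∀ B ∈ P, ∀ x y : α, q x = q y → (x ∈ B ↔ y ∈ B)) →
      ∀ B ∈ P, (univ : Finset α).filter (fun a => q a ∈ B.image q) = B := by
    intro P hP hsat B hB
    ext a
    simp only [mem_filter, mem_univ, true_and, Finset.mem_image]
    constructor
    · rintro ⟨y, hy, hqy⟩
      exact (hsat B hB a y hqy.symm).2 hy
    · intro ha; exact ⟨a, ha, rfl⟩
  refine Finset.sum_bij' (fun P _ => P.image (Finset.image q))
    (fun Q _ => Q.image (fun D => (univ : Finset α).filter (fun a => q a ∈ D)))
    ?_ ?_ ?_ ?_ ?_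
  · -- forward membership
    rintro P hPm
    simp only [mem_filter] at hPm
    obtain ⟨hP, hsat⟩ := hPm
    obtain ⟨hne, hdisj, hsup⟩ := mem_setPartitions.1 hP
    refine mem_setPartitions.2 ⟨?_, ?_, ?_⟩
    · rintro D hD
      obtain ⟨B, hB, rfl⟩ := Finset.mem_image.1 hD
      exact (hne B hB).image q
    · rintro D hD D' hD' hDne
      obtain ⟨B, hB, rfl⟩ := Finset.mem_image.1 hD
      obtain ⟨B', hB', rfl⟩ := Finset.mem_image.1 hD'
      have hBne : B ≠ B' := fun h => hDne (by rw [h])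
      refine Finset.disjoint_left.2 ?_
      rintro z hz hz'
      obtain ⟨x, hx, rfl⟩ := Finset.mem_image.1 hz
      obtain ⟨y, hy, hqy⟩ := Finset.mem_image.1 hz'
      have hxB' : x ∈ B' := (hsat B' hB' x y hqy.symm).2 hy
      exact Finset.disjoint_left.1 (hdisj B hB B' hB' hBne) hx hxB'
    · ext b
      simp only [mem_sup, id, mem_univ, iff_true]
      obtain ⟨a, rfl⟩ := hq b
      obtain ⟨B, hB, haB⟩ := exists_block hP (mem_univ a)
      exact ⟨B.image q, Finset.mem_image_of_mem _ hB, Finset.mem_image_of_mem q haB⟩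
  · -- backward membership
    rintro Q hQ
    obtain ⟨hne, hdisj, hsup⟩ := mem_setPartitions.1 hQ
    rw [mem_filter]
    constructor
    · refine mem_setPartitions.2 ⟨?_, ?_, ?_⟩
      · rintro B hB
        obtain ⟨D, hD, rfl⟩ := Finset.mem_image.1 hB
        obtain ⟨d, hd⟩ := hne D hD
        obtain ⟨a, rfl⟩ := hq d
        exact ⟨a, by simp [hd]⟩
      · rintro B hB B' hB' hBne
        obtain ⟨D, hD, rfl⟩ := Finset.mem_image.1 hB
        obtain ⟨D', hD', rfl⟩ := Finset.mem_image.1 hB'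
        have hDne : D ≠ D' := fun h => hBne (by rw [h])
        refine Finset.disjoint_left.2 ?_
        rintro a ha ha'
        simp only [mem_filter] at ha ha'
        exact Finset.disjoint_left.1 (hdisj D hD D' hD' hDne) ha.2 ha'.2
      · ext a
        simp only [mem_sup, id, mem_univ, iff_true]
        have : q a ∈ Q.sup id := by rw [hsup]; exact mem_univ _
        obtain ⟨D, hD, hqa⟩ := mem_sup.1 this
        exact ⟨(univ : Finset α).filter (fun x => q x ∈ D), Finset.mem_image_of_mem _ hD,
          by simpa using hqa⟩
    · rintro B hB x y hqxy
      obtain ⟨D, hD, rfl⟩ := Finset.mem_image.1 hB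
      simp only [mem_filter, mem_univ, true_and, hqxy]
  · -- left inverse
    rintro P hPm
    simp only [mem_filter] at hPm
    obtain ⟨hP, hsat⟩ := hPm
    rw [Finset.image_image]
    rw [show P.image ((fun D => (univ : Finset α).filter (fun a => q a ∈ D)) ∘ Finset.image q)
        = P.image id from Finset.image_congr (fun B hB => filt_im hP hsat B hB)]
    exact Finset.image_id
  · -- right inverse
    rintro Q hQ
    rw [Finset.image_image]
    rw [show Q.image (Finset.image q ∘ fun D => (univ : Finset α).filter (fun a => q a ∈ D))
        = Q.image id from Finset.image_congr ?_]
    · exact Finset.image_id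
    · rintro D hD
      simp only [Function.comp_apply, id]
      ext d
      simp only [Finset.mem_image, mem_filter, mem_univ, true_and]
      constructor
      · rintro ⟨a, ha, rfl⟩; exact ha
      · intro hd; obtain ⟨a, rfl⟩ := hq d; exact ⟨a, hd, rfl⟩
  · -- value
    rintro P hPm
    simp only [mem_filter] at hPm
    obtain ⟨hP, hsat⟩ := hPm
    congr 1
    rw [Finset.card_image_of_injOn]
    rintro B hB B' hB' h
    rw [← filt_im hP hsat B hB, ← filt_im hP hsat B' hB', h]

end saturated

section graphs

variable {n : ℕ}

lemma edgeFinset_fromEdgeSet (F : Finset (Sym2 (Fin n))) (hF : ∀ e ∈ F, ¬ e.IsDiag)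
    (inst : Fintype (SimpleGraph.fromEdgeSet (↑F : Set (Sym2 (Fin n)))).edgeSet) :
    @SimpleGraph.edgeFinset _ (SimpleGraph.fromEdgeSet (↑F : Set (Sym2 (Fin n)))) inst = F := by
  apply Finset.coe_injective
  rw [SimpleGraph.coe_edgeFinset, SimpleGraph.edgeSet_fromEdgeSet]
  ext e
  simp only [Set.mem_diff, Set.mem_setOf_eq, Finset.mem_coe, and_iff_left_iff_imp]
  exact hF e

lemma sum_graphs_eq (f : SimpleGraph (Fin n) → ℝ) :
    ∑ G : SimpleGraph (Fin n), f G
      = ∑ F ∈ ((univ : Finset (Sym2 (Fin n))).filter (fun e => ¬ e.IsDiag)).powerset,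
          f (SimpleGraph.fromEdgeSet (↑F : Set (Sym2 (Fin n)))) := by
  refine Finset.sum_bij' (fun G _ => G.edgeFinset)
    (fun F _ => SimpleGraph.fromEdgeSet (↑F : Set (Sym2 (Fin n)))) ?_ ?_ ?_ ?_ ?_
  · intro G _
    rw [Finset.mem_powerset]
    intro e he
    rw [mem_filter]
    exact ⟨mem_univ e, SimpleGraph.not_isDiag_of_mem_edgeSet G (by simpa using he)⟩
  · intro F _
    exact mem_univ _
  · intro G _
    simp [SimpleGraph.fromEdgeSet_edgeSet]
  · intro F hF
    rw [Finset.mem_powerset] at hF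
    exact edgeFinset_fromEdgeSet F (fun e he => (mem_filter.1 (hF he)).2) _
  · intro G _
    simp [SimpleGraph.fromEdgeSet_edgeSet]

lemma connected_iff_card_one (G : SimpleGraph (Fin n)) (hn : 0 < n)
    [Fintype G.ConnectedComponent] :
    G.Connected ↔ Fintype.card G.ConnectedComponent = 1 := by
  constructor
  · intro hG
    rw [Fintype.card_eq_one_iff]
    refine ⟨G.connectedComponentMk ⟨0, hn⟩, ?_⟩
    intro c
    obtain ⟨v, rfl⟩ := c.exists_rep
    exact SimpleGraph.ConnectedComponent.eq.2 (hG.preconnected v ⟨0, hn⟩)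
  · intro hc
    obtain ⟨c, hcall⟩ := Fintype.card_eq_one_iff.1 hc
    rw [SimpleGraph.connected_iff]
    refine ⟨fun u v => ?_, ⟨⟨0, hn⟩⟩⟩
    have : G.connectedComponentMk u = G.connectedComponentMk v := by
      rw [hcall (G.connectedComponentMk u), hcall (G.connectedComponentMk v)]
    exact SimpleGraph.ConnectedComponent.eq.1 this

set_option maxHeartbeats 1000000 in
lemma sum_partitions_within (hn : 0 < n) (F : Finset (Sym2 (Fin n)))
    (hF : ∀ e ∈ F, ¬ e.IsDiag) :
    ∑ P ∈ setPartitions (univ : Finset (Fin n)),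
      (if ∀ e ∈ F, ∃ B ∈ P, ∀ v ∈ e, v ∈ B then
        (-1:ℝ)^(P.card-1) * (Nat.factorial (P.card-1) : ℝ) else 0)
      = if (SimpleGraph.fromEdgeSet (↑F : Set (Sym2 (Fin n)))).Connected then 1 else 0 := by
  set G := SimpleGraph.fromEdgeSet (↑F : Set (Sym2 (Fin n))) with hG
  haveI : Fintype G.ConnectedComponent := Fintype.ofFinite _
  have hq : Function.Surjective (G.connectedComponentMk) := fun c => c.exists_rep
  -- equivalence of conditions
  have hequiv : ∀ P ∈ setPartitions (univ : Finset (Fin n)),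
      ((∀ e ∈ F, ∃ B ∈ P, ∀ v ∈ e, v ∈ B) ↔
        (∀ B ∈ P, ∀ x y : Fin n,
          G.connectedComponentMk x = G.connectedComponentMk y → (x ∈ B ↔ y ∈ B))) := by
    intro P hP
    constructor
    · intro hwithin
      have adj_block : ∀ x y : Fin n, G.Adj x y → ∀ B ∈ P, (x ∈ B ↔ y ∈ B) := by
        intro x y hxy B hB
        rw [hG, SimpleGraph.fromEdgeSet_adj] at hxy
        obtain ⟨B₀, hB₀, hvB₀⟩ := hwithin _ hxy.1
        have hx0 : x ∈ B₀ := hvB₀ x (Sym2.mem_mk_left x y)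
        have hy0 : y ∈ B₀ := hvB₀ y (Sym2.mem_mk_right x y)
        constructor
        · intro hxB
          rw [block_unique hP hB hB₀ hxB hx0]
          exact hy0
        · intro hyB
          rw [block_unique hP hB hB₀ hyB hy0]
          exact hx0
      have reach_block : ∀ x y : Fin n, G.Reachable x y → ∀ B ∈ P, (x ∈ B ↔ y ∈ B) := by
        intro x y hxy
        obtain ⟨w⟩ := hxy
        induction w with
        | nil => intro B hB; exact Iff.rfl
        | cons h p ih => intro B hB; exact (adj_block _ _ h B hB).trans (ih B hB)
      intro B hB x y hqxy
      exact reach_block x y (SimpleGraph.ConnectedComponent.eq.1 hqxy) B hB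
    · intro hsat e he
      revert he
      induction e using Sym2.ind with
      | _ x y =>
        intro he
        have hxy : x ≠ y := by
          intro h
          exact hF _ he (by simp [h])
        have hadj : G.Adj x y := by
          rw [hG, SimpleGraph.fromEdgeSet_adj]
          exact ⟨by simpa using he, hxy⟩
        obtain ⟨B, hB, hxB⟩ := exists_block hP (mem_univ x)
        refine ⟨B, hB, ?_⟩
        intro v hv
        rcases Sym2.mem_iff.1 hv with rfl | rfl
        · exact hxB
        · exact (hsat B hB x v
            (SimpleGraph.ConnectedComponent.eq.2 hadj.reachable)).1 hxB
  have hcard : (if Fintype.card G.ConnectedComponent = 1 then (1:ℝ) else 0)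
      = if G.Connected then 1 else 0 := by
    by_cases hconn : G.Connected
    · rw [if_pos hconn, if_pos ((connected_iff_card_one G hn).1 hconn)]
    · rw [if_neg hconn, if_neg (fun h => hconn ((connected_iff_card_one G hn).2 h))]
  have htest := sum_saturated G.connectedComponentMk hq
    (fun k => (-1:ℝ)^(k-1) * (Nat.factorial (k-1) : ℝ))
  rw [sum_moebius _ ⟨_, mem_univ (G.connectedComponentMk ⟨0, hn⟩)⟩, Finset.card_univ] at htest
  refine Eq.trans (Finset.sum_congr rfl fun P hP => ?_) (htest.trans hcard)
  simp only [hequiv P hP]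
  congr

end graphs

theorem cumulant_of_disconnection_eq_sum_connected_graphs
    (n : ℕ) (hn : 1 ≤ n) (r : Fin n → Fin n → Prop) (hr : Symmetric r) :
    cumulantFamily (disconnectionIndicator r) (Finset.univ : Finset (Fin n)) =
      ∑ G : SimpleGraph (Fin n),
        if G.Connected ∧ (∀ i j : Fin n, G.Adj i j → r i j) then
          (-1 : ℝ) ^ G.edgeSet.ncard else 0 := by
  have hn0 : 0 < n := hn
  set T : Finset (Sym2 (Fin n)) := univ.filter (fun e => ¬ e.IsDiag) with hT
  set TR : Finset (Sym2 (Fin n)) := T.filter (fun e => e ∈ Sym2.fromRel (⟨fun a b h => hr h⟩ : Std.Symm r)) with hTRdef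
  have hTRsub : TR ⊆ T := Finset.filter_subset _ _
  -- per-partition expansion
  have hPterm : ∀ P ∈ setPartitions (univ : Finset (Fin n)),
      (∏ B ∈ P, disconnectionIndicator r B)
        = ∑ Fs ∈ TR.powerset,
            (if (∀ e ∈ Fs, ∃ B ∈ P, ∀ v ∈ e, v ∈ B) then (-1:ℝ)^Fs.card else 0) := by
    intro P hP
    set W : Finset (Sym2 (Fin n)) := TR.filter (fun e => ∃ B ∈ P, ∀ v ∈ e, v ∈ B) with hW
    have hA : (∏ B ∈ P, disconnectionIndicator r B)
        = if (∀ B ∈ P, ∀ i ∈ B, ∀ j ∈ B, i ≠ j → ¬ r i j) then (1:ℝ) else 0 := by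
      unfold disconnectionIndicator
      rw [Finset.prod_boole]
      congr
    have hiff : (∀ B ∈ P, ∀ i ∈ B, ∀ j ∈ B, i ≠ j → ¬ r i j) ↔ W = ∅ := by
      constructor
      · intro hcond
        rw [Finset.eq_empty_iff_forall_notMem]
        intro e he
        rw [hW, mem_filter, hTRdef, mem_filter, hT, mem_filter] at he
        obtain ⟨⟨⟨-, hnd⟩, hrel⟩, B, hB, hvB⟩ := he
        revert hnd hrel hvB
        induction e using Sym2.ind with
        | _ x y =>
          intro hrel hnd hvB
          have hxy : x ≠ y := fun h => hnd (by simp [h])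
          have hrxy : r x y := Sym2.fromRel_prop.1 hrel
          exact hcond B hB x (hvB x (Sym2.mem_mk_left x y))
            y (hvB y (Sym2.mem_mk_right x y)) hxy hrxy
      · intro hemp B hB i hi j hj hij hrij
        have : s(i, j) ∈ W := by
          rw [hW, mem_filter, hTRdef, mem_filter, hT, mem_filter]
          refine ⟨⟨⟨mem_univ _, ?_⟩, Sym2.fromRel_prop.2 hrij⟩, B, hB, ?_⟩
          · simpa using hij
          · intro v hv
            rcases Sym2.mem_iff.1 hv with rfl | rfl
            · exact hi
            · exact hj
        rw [hemp] at this
        simp at this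
    have hB2 : (if W = ∅ then (1:ℝ) else 0) = ∑ Fs ∈ W.powerset, (-1:ℝ)^Fs.card :=
      sum_powerset_neg_one_pow_card_real.symm
    have hC : ∑ Fs ∈ W.powerset, (-1:ℝ)^Fs.card
        = ∑ Fs ∈ TR.powerset,
            (if (∀ e ∈ Fs, ∃ B ∈ P, ∀ v ∈ e, v ∈ B) then (-1:ℝ)^Fs.card else 0) := by
      rw [← Finset.sum_filter]
      apply Finset.sum_congr _ (fun x _ => rfl)
      ext Fs
      simp only [Finset.mem_powerset, Finset.mem_filter, hW]
      constructor
      · intro hsub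
        have h1 : Fs ⊆ TR := fun e he => (Finset.mem_filter.1 (hsub he)).1
        exact ⟨h1, fun e he => (Finset.mem_filter.1 (hsub he)).2⟩
      · rintro ⟨hsub, hall⟩ e he
        exact Finset.mem_filter.2 ⟨hsub he, hall e he⟩
    calc (∏ B ∈ P, disconnectionIndicator r B)
        = if (∀ B ∈ P, ∀ i ∈ B, ∀ j ∈ B, i ≠ j → ¬ r i j) then (1:ℝ) else 0 := hA
      _ = if W = ∅ then (1:ℝ) else 0 := by simp only [hiff]
      _ = ∑ Fs ∈ W.powerset, (-1:ℝ)^Fs.card := hB2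
      _ = _ := hC
  -- main chain
  unfold cumulantFamily
  have step1 : ∑ P ∈ setPartitions (univ : Finset (Fin n)),
      (-1 : ℝ) ^ (P.card - 1) * (Nat.factorial (P.card - 1))
        * ∏ B ∈ P, disconnectionIndicator r B
      = ∑ Fs ∈ TR.powerset, ∑ P ∈ setPartitions (univ : Finset (Fin n)),
          (if (∀ e ∈ Fs, ∃ B ∈ P, ∀ v ∈ e, v ∈ B) then
            (-1:ℝ)^Fs.card * ((-1 : ℝ) ^ (P.card - 1) * (Nat.factorial (P.card - 1))) else 0) := by
    rw [← Finset.sum_comm]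
    apply Finset.sum_congr rfl
    intro P hP
    rw [hPterm P hP, Finset.mul_sum]
    apply Finset.sum_congr rfl
    intro Fs _
    rw [mul_ite, mul_zero, mul_comm]
  rw [step1]
  have step2 : ∀ Fs ∈ TR.powerset,
      (∑ P ∈ setPartitions (univ : Finset (Fin n)),
        (if (∀ e ∈ Fs, ∃ B ∈ P, ∀ v ∈ e, v ∈ B) then
          (-1:ℝ)^Fs.card * ((-1 : ℝ) ^ (P.card - 1) * (Nat.factorial (P.card - 1))) else 0))
      = (-1:ℝ)^Fs.card *
          (if (SimpleGraph.fromEdgeSet (↑Fs : Set (Sym2 (Fin n)))).Connected then 1 else 0) := by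
    intro Fs hFs
    have hnd : ∀ e ∈ Fs, ¬ e.IsDiag := by
      intro e he
      have := hTRsub (Finset.mem_powerset.1 hFs he)
      rw [hT, mem_filter] at this
      exact this.2
    rw [← sum_partitions_within hn0 Fs hnd, Finset.mul_sum]
    apply Finset.sum_congr rfl
    intro P hP
    rw [mul_ite, mul_zero]
  rw [Finset.sum_congr rfl step2]
  -- now the graph side
  rw [sum_graphs_eq (fun G => if G.Connected ∧ (∀ i j : Fin n, G.Adj i j → r i j) then
    (-1 : ℝ) ^ G.edgeSet.ncard else 0)]
  have hedge : ∀ F ∈ T.powerset,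
      (SimpleGraph.fromEdgeSet (↑F : Set (Sym2 (Fin n)))).edgeSet = (↑F : Set (Sym2 (Fin n))) := by
    intro F hF
    rw [SimpleGraph.edgeSet_fromEdgeSet]
    ext e
    simp only [Set.mem_diff, Set.mem_setOf_eq, Finset.mem_coe, and_iff_left_iff_imp]
    intro he hd
    have := Finset.mem_powerset.1 hF he
    rw [hT, mem_filter] at this
    exact this.2 hd
  have hrc : ∀ F ∈ T.powerset,
      ((∀ i j : Fin n, (SimpleGraph.fromEdgeSet (↑F : Set (Sym2 (Fin n)))).Adj i j → r i j)
        ↔ F ⊆ TR) := by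
    intro F hF
    constructor
    · intro hcomp e he
      rw [hTRdef, mem_filter]
      refine ⟨Finset.mem_powerset.1 hF he, ?_⟩
      revert he
      induction e using Sym2.ind with
      | _ x y =>
        intro he
        have hxy : x ≠ y := by
          intro h
          have := Finset.mem_powerset.1 hF he
          rw [hT, mem_filter] at this
          exact this.2 (by simp [h])
        have hadj : (SimpleGraph.fromEdgeSet (↑F : Set (Sym2 (Fin n)))).Adj x y := by
          rw [SimpleGraph.fromEdgeSet_adj]
          exact ⟨by simpa using he, hxy⟩
        exact Sym2.fromRel_prop.2 (hcomp x y hadj)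
    · intro hsub i j hadj
      rw [SimpleGraph.fromEdgeSet_adj] at hadj
      have := hsub (by simpa using hadj.1)
      rw [hTRdef, mem_filter] at this
      exact Sym2.fromRel_prop.1 this.2
  have step3 : ∑ F ∈ T.powerset,
      (if (SimpleGraph.fromEdgeSet (↑F : Set (Sym2 (Fin n)))).Connected
          ∧ (∀ i j : Fin n, (SimpleGraph.fromEdgeSet (↑F : Set (Sym2 (Fin n)))).Adj i j → r i j)
        then (-1 : ℝ) ^ (SimpleGraph.fromEdgeSet (↑F : Set (Sym2 (Fin n)))).edgeSet.ncard else 0)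
      = ∑ F ∈ T.powerset,
          (if (SimpleGraph.fromEdgeSet (↑F : Set (Sym2 (Fin n)))).Connected ∧ F ⊆ TR
            then (-1 : ℝ) ^ F.card else 0) := by
    apply Finset.sum_congr rfl
    intro F hF
    have h1 : ((SimpleGraph.fromEdgeSet (↑F : Set (Sym2 (Fin n)))).Connected
          ∧ (∀ i j : Fin n, (SimpleGraph.fromEdgeSet (↑F : Set (Sym2 (Fin n)))).Adj i j → r i j))
        ↔ ((SimpleGraph.fromEdgeSet (↑F : Set (Sym2 (Fin n)))).Connected ∧ F ⊆ TR) :=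
      and_congr_right (fun _ => hrc F hF)
    have h2 : (-1 : ℝ) ^ (SimpleGraph.fromEdgeSet (↑F : Set (Sym2 (Fin n)))).edgeSet.ncard
        = (-1 : ℝ) ^ F.card := by
      rw [hedge F hF, Set.ncard_coe_finset]
    simp only [h1, h2]
  rw [← hT]
  rw [← step3.symm.trans (Finset.sum_congr rfl fun F _ => by congr)]
  have step4 : ∑ F ∈ T.powerset,
      (if (SimpleGraph.fromEdgeSet (↑F : Set (Sym2 (Fin n)))).Connected ∧ F ⊆ TR
        then (-1 : ℝ) ^ F.card else 0)
      = ∑ F ∈ TR.powerset,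
          (if (SimpleGraph.fromEdgeSet (↑F : Set (Sym2 (Fin n)))).Connected ∧ F ⊆ TR
            then (-1 : ℝ) ^ F.card else 0) := by
    symm
    apply Finset.sum_subset (Finset.powerset_mono.2 hTRsub)
    intro F hF hnF
    rw [Finset.mem_powerset] at hnF
    rw [if_neg (fun h => hnF h.2)]
  rw [step4]
  apply Finset.sum_congr rfl
  intro F hF
  rw [Finset.mem_powerset] at hF
  rw [mul_ite, mul_one, mul_zero]
  by_cases hconn : (SimpleGraph.fromEdgeSet (↑F : Set (Sym2 (Fin n)))).Connected
  · rw [if_pos hconn, if_pos ⟨hconn, hF⟩]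
  · rw [if_neg hconn, if_neg (fun h => hconn h.1)]
end

section
/- Let n ≥ 1, let ∼ be a symmetric relation on {1,…,n}, let Φ be the associated disconnection indicator on nonempty subsets of {1,…,n}, and let φ be the cumulant family of Φ. Then the tree inequality |φ({1,…,n})| ≤ ∑_T ∏_{{i,j} ∈ E(T)} 1_{i∼j} holds, where the sum ranges over all trees T on the vertex set {1,…,n}; i.e. |φ({1,…,n})| is at most the number of trees on {1,…,n} all of whose edges {i,j} satisfy i ∼ j. -/
/-!
Statement 2 (tree inequality): let `∼` be a symmetric relation on `{1,…,n}` (`n ≥ 1`), `Φ` the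
associated disconnection indicator on nonempty subsets, and `φ` its cumulant family.  Then
`|φ({1,…,n})|` is at most the number of trees on `{1,…,n}` all of whose edges `{i,j}`
satisfy `i ∼ j`.
-/

open Finset

open scoped Classical

set_option linter.unusedSectionVars false

namespace TreeIneq

variable {α : Type*} [DecidableEq α]

lemma mem_setPartitions {S : Finset α} {π : Finset (Finset α)} :
    π ∈ setPartitions S ↔
      (∀ B ∈ π, B.Nonempty) ∧ (∀ B ∈ π, ∀ B' ∈ π, B ≠ B' → Disjoint B B') ∧ π.sup id = S := by
  unfold setPartitions
  simp only [mem_filter, mem_powerset, and_iff_right_iff_imp]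
  intro h B hB
  exact mem_powerset.2 (h.2.2 ▸ (Finset.le_sup (f := id) hB : (id B : Finset α) ≤ π.sup id))

lemma block_subset {S : Finset α} {π : Finset (Finset α)} (hπ : π ∈ setPartitions S)
    {B : Finset α} (hB : B ∈ π) : B ⊆ S :=
  (mem_setPartitions.1 hπ).2.2 ▸ (Finset.le_sup (f := id) hB : (id B : Finset α) ≤ π.sup id)

lemma exists_block {S : Finset α} {π : Finset (Finset α)} (hπ : π ∈ setPartitions S)
    {x : α} (hx : x ∈ S) : ∃ B ∈ π, x ∈ B := by
  have := (mem_setPartitions.1 hπ).2.2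
  rw [← this] at hx
  simpa using Finset.mem_sup.1 hx

lemma block_unique {S : Finset α} {π : Finset (Finset α)} (hπ : π ∈ setPartitions S)
    {B B' : Finset α} (hB : B ∈ π) (hB' : B' ∈ π) {x : α} (hx : x ∈ B) (hx' : x ∈ B') :
    B = B' := by
  by_contra hne
  exact (Finset.disjoint_left.1 ((mem_setPartitions.1 hπ).2.1 B hB B' hB' hne)) hx hx'

/-! ### Reachability through a finset of edges -/

def stepRel (T : Finset (Sym2 α)) (x y : α) : Prop := s(x, y) ∈ T

lemma stepRel_symm (T : Finset (Sym2 α)) : Symmetric (stepRel T) := by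
  intro x y h
  unfold stepRel at *
  rwa [Sym2.eq_swap]

abbrev Reach (T : Finset (Sym2 α)) : α → α → Prop := Relation.ReflTransGen (stepRel T)

lemma reach_symm {T : Finset (Sym2 α)} {a b : α} (h : Reach T a b) : Reach T b a :=
  have : Std.Symm (stepRel T) := ⟨fun _ _ hs => stepRel_symm T hs⟩
  Relation.ReflTransGen.symmetric.symm _ _ h

lemma reach_mono {T T' : Finset (Sym2 α)} (hT : T ⊆ T') {a b : α} (h : Reach T a b) :
    Reach T' a b :=
  Relation.ReflTransGen.mono (fun _ _ hs => hT hs) _ _ h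

def Connects (V : Finset α) (T : Finset (Sym2 α)) : Prop :=
  ∀ a ∈ V, ∀ b ∈ V, Reach T a b

def IsSpTree (V : Finset α) (T : Finset (Sym2 α)) : Prop :=
  (∀ e ∈ T, ¬ Sym2.IsDiag e) ∧ (∀ e ∈ T, ∀ x ∈ e, x ∈ V) ∧ Connects V T ∧ T.card + 1 = V.card

noncomputable def tcount (V : Finset α) (E : Finset (Sym2 α)) : ℕ :=
  ((E.powerset).filter (fun T => IsSpTree V T)).card

noncomputable def mu (k : ℕ) : ℝ := (-1 : ℝ) ^ (k - 1) * ((k - 1).factorial : ℝ)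

def Indep (E : Finset (Sym2 α)) (B : Finset α) : Prop := ∀ e ∈ E, ¬ (∀ x ∈ e, x ∈ B)

noncomputable def Qsum (V : Finset α) (E : Finset (Sym2 α)) : ℝ :=
  ∑ π ∈ (setPartitions V).filter (fun π => ∀ B ∈ π, Indep E B), mu π.card

/-! ### contraction of reachability -/

lemma update_eq_on_edge {u v x y : α} (h : s(x, y) = s(u, v)) :
    Function.update id v u x = Function.update id v u y := by
  rcases Sym2.eq_iff.1 h with ⟨rfl, rfl⟩ | ⟨rfl, rfl⟩ <;>
    · simp only [Function.update]
      split <;> split <;> simp_all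

lemma reach_contract {S : Finset (Sym2 α)} {u v : α} {e : Sym2 α} (he : e = s(u, v)) {a b : α}
    (h : Reach S a b) :
    Reach ((S.erase e).image (Sym2.map (Function.update id v u)))
      (Function.update id v u a) (Function.update id v u b) := by
  set f := Function.update id v u with hf
  induction h with
  | refl => exact Relation.ReflTransGen.refl
  | tail hab hstep ih =>
    rename_i b' c'
    by_cases hbc : s(b', c') = e
    · rw [show f c' = f b' from (update_eq_on_edge (hbc.trans he)).symm]
      exact ih
    · refine ih.tail ?_
      have : Sym2.map f s(b', c') ∈ (S.erase e).image (Sym2.map f) :=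
        Finset.mem_image_of_mem _ (Finset.mem_erase.2 ⟨hbc, hstep⟩)
      rwa [Sym2.map_pair_eq] at this

lemma connects_empty_card {V : Finset α} (h : Connects V (∅ : Finset (Sym2 α))) :
    V.card ≤ 1 := by
  refine Finset.card_le_one.2 fun a ha b hb => ?_
  have h' := h a ha b hb
  clear h
  induction h' with
  | refl => rfl
  | tail _ hstep ih => exact absurd hstep (Finset.notMem_empty _)

lemma sym2_exists (e : Sym2 α) : ∃ x y, e = s(x, y) := by
  induction e using Sym2.ind with
  | _ x y => exact ⟨x, y, rfl⟩

lemma connects_card : ∀ (N : ℕ) (S : Finset (Sym2 α)), S.card ≤ N →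
    ∀ V : Finset α, Connects V S → V.card ≤ S.card + 1 := by
  intro N
  induction N with
  | zero =>
    intro S hS V hV
    rw [Finset.card_eq_zero.1 (Nat.le_zero.1 hS)] at hV ⊢
    simpa using connects_empty_card hV
  | succ N ih =>
    intro S hS V hV
    rcases Finset.eq_empty_or_nonempty S with rfl | ⟨e, he⟩
    · simpa using connects_empty_card hV
    obtain ⟨u, v, rfl⟩ := sym2_exists e
    set f := Function.update id v u with hf
    set S' := (S.erase s(u, v)).image (Sym2.map f) with hS'
    have hcard' : S'.card ≤ N := by
      have h1 : S'.card ≤ (S.erase s(u, v)).card := Finset.card_image_le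
      have h2 : (S.erase s(u, v)).card = S.card - 1 := Finset.card_erase_of_mem he
      have h3 : 1 ≤ S.card := Finset.card_pos.2 ⟨_, he⟩
      omega
    have hV' : Connects (V.erase v) S' := by
      intro a ha b hb
      have h := reach_contract (S := S) (u := u) (v := v) rfl
        (hV a (Finset.mem_of_mem_erase ha) b (Finset.mem_of_mem_erase hb))
      rwa [Function.update_of_ne (Finset.ne_of_mem_erase ha) _ _,
        Function.update_of_ne (Finset.ne_of_mem_erase hb) _ _] at h
    have := ih S' hcard' (V.erase v) hV'
    have h4 : V.card ≤ (V.erase v).card + 1 := by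
      by_cases hv : v ∈ V
      · rw [Finset.card_erase_of_mem hv]
        have : 1 ≤ V.card := Finset.card_pos.2 ⟨_, hv⟩
        omega
      · rw [Finset.erase_eq_of_notMem hv]
        omega
    have h1 : S'.card ≤ (S.erase s(u, v)).card := Finset.card_image_le
    have h2 : (S.erase s(u, v)).card = S.card - 1 := Finset.card_erase_of_mem he
    have h3 : 1 ≤ S.card := Finset.card_pos.2 ⟨_, he⟩
    omega

end TreeIneq

set_option linter.unusedSectionVars false

namespace TreeIneq

variable {α : Type*} [DecidableEq α]

lemma setPartitions_card_pos {S : Finset α} (hS : S.Nonempty) {π : Finset (Finset α)}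
    (hπ : π ∈ setPartitions S) : 0 < π.card := by
  rcases Finset.eq_empty_or_nonempty π with rfl | h
  · exfalso
    have := (mem_setPartitions.1 hπ).2.2
    simp only [Finset.sup_empty] at this
    rw [← this] at hS
    simp at hS
  · exact Finset.card_pos.2 h

lemma setPartitions_singleton (x : α) : setPartitions ({x} : Finset α) = {{{x}}} := by
  ext π
  rw [mem_setPartitions, Finset.mem_singleton]
  constructor
  · rintro ⟨h1, _h2, h3⟩
    have hb : ∀ B ∈ π, B = {x} := by
      intro B hB
      have hsub : B ⊆ {x} := h3 ▸ (Finset.le_sup (f := id) hB : (id B : Finset α) ≤ π.sup id)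
      rcases Finset.subset_singleton_iff.1 hsub with rfl | h
      · exact absurd (h1 _ hB) (by simp)
      · exact h
    have hne : π ≠ ∅ := by
      rintro rfl
      simp only [Finset.sup_empty, Finset.bot_eq_empty] at h3
      exact Finset.singleton_ne_empty x h3.symm
    have hsub : π ⊆ {({x} : Finset α)} := fun B hB => Finset.mem_singleton.2 (hb B hB)
    rcases Finset.subset_singleton_iff.1 hsub with rfl | h
    · exact absurd rfl hne
    · exact h
  · rintro rfl
    refine ⟨?_, ?_, ?_⟩ <;> simp

/-- Key identity: the signed sum of `mu` over all set partitions vanishes unless the set is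
a singleton. -/
lemma sum_mu_setPartitions (V : Finset α) (hV : V.Nonempty) :
    ∑ π ∈ setPartitions V, mu π.card = if V.card = 1 then 1 else 0 := by
  by_cases h1 : V.card = 1
  · obtain ⟨x, rfl⟩ := Finset.card_eq_one.1 h1
    rw [setPartitions_singleton, if_pos h1]
    simp [mu]
  -- now V.card ≥ 2
  obtain ⟨x, hx⟩ := hV
  set V' := V.erase x with hV'def
  have hxV' : x ∉ V' := Finset.notMem_erase _ _
  have hV'card : V'.card = V.card - 1 := Finset.card_erase_of_mem hx
  have hVpos : 1 ≤ V.card := Finset.card_pos.2 ⟨x, hx⟩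
  have hV2 : 2 ≤ V.card := by omega
  have hV'ne : V'.Nonempty := Finset.card_pos.1 (by omega)
  have hblocksV' : ∀ {π' : Finset (Finset α)}, π' ∈ setPartitions V' →
      ∀ {B : Finset α}, B ∈ π' → x ∉ B := by
    intro π' hπ' B hB hxB
    exact hxV' (block_subset hπ' hB hxB)
  rw [if_neg h1]
  rw [← Finset.sum_filter_add_sum_filter_not (setPartitions V)
    (fun π => ({x} : Finset α) ∈ π) (fun π => mu π.card)]
  have hA1 : ∑ π ∈ (setPartitions V).filter (fun π => ({x} : Finset α) ∈ π), mu π.card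
      = ∑ π' ∈ setPartitions V', mu (π'.card + 1) := by
    refine Finset.sum_nbij' (fun π => π.erase {x}) (fun π' => insert {x} π') ?_ ?_ ?_ ?_ ?_
    · intro π hπ
      obtain ⟨hπ, hxπ⟩ := Finset.mem_filter.1 hπ
      obtain ⟨h1', h2', h3'⟩ := mem_setPartitions.1 hπ
      refine mem_setPartitions.2 ⟨fun B hB => h1' B (Finset.mem_of_mem_erase hB),
        fun B hB B' hB' hne => h2' B (Finset.mem_of_mem_erase hB) B'
          (Finset.mem_of_mem_erase hB') hne, ?_⟩
      ext y
      simp only [Finset.mem_sup, id]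
      constructor
      · rintro ⟨B, hB, hyB⟩
        have hBπ := Finset.mem_of_mem_erase hB
        have hBne := Finset.ne_of_mem_erase hB
        have hyV : y ∈ V := block_subset hπ hBπ hyB
        have hyx : y ≠ x := by
          intro h
          exact hBne (block_unique hπ hBπ hxπ (h ▸ hyB) (Finset.mem_singleton_self x))
        exact Finset.mem_erase.2 ⟨hyx, hyV⟩
      · intro hy
        obtain ⟨hyx, hyV⟩ := Finset.mem_erase.1 hy
        obtain ⟨B, hB, hyB⟩ := exists_block hπ hyV
        refine ⟨B, Finset.mem_erase.2 ⟨?_, hB⟩, hyB⟩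
        rintro rfl
        exact hyx (Finset.mem_singleton.1 hyB)
    · intro π' hπ'
      obtain ⟨h1', h2', h3'⟩ := mem_setPartitions.1 hπ'
      refine Finset.mem_filter.2 ⟨mem_setPartitions.2 ⟨?_, ?_, ?_⟩, Finset.mem_insert_self _ _⟩
      · intro B hB
        rcases Finset.mem_insert.1 hB with rfl | hB
        · exact ⟨x, Finset.mem_singleton_self x⟩
        · exact h1' B hB
      · intro B hB B' hB' hne
        rcases Finset.mem_insert.1 hB with rfl | hB <;>
          rcases Finset.mem_insert.1 hB' with rfl | hB'
        · exact absurd rfl hne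
        · exact Finset.disjoint_singleton_left.2 (hblocksV' hπ' hB')
        · exact (Finset.disjoint_singleton_left.2 (hblocksV' hπ' hB)).symm
        · exact h2' B hB B' hB' hne
      · rw [Finset.sup_insert, h3']
        simp only [id_eq, sup_eq_union]
        ext y
        constructor
        · intro h
          rcases Finset.mem_union.1 h with h | h
          · rw [Finset.mem_singleton.1 h]; exact hx
          · exact Finset.mem_of_mem_erase h
        · intro hy
          by_cases hyx : y = x
          · exact Finset.mem_union.2 (Or.inl (Finset.mem_singleton.2 hyx))
          · exact Finset.mem_union.2 (Or.inr (Finset.mem_erase.2 ⟨hyx, hy⟩))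
    · intro π hπ
      exact Finset.insert_erase (Finset.mem_filter.1 hπ).2
    · intro π' hπ'
      refine Finset.erase_insert ?_
      intro hmem
      exact hxV' (block_subset hπ' hmem (Finset.mem_singleton_self x))
    · intro π hπ
      obtain ⟨hπ', hxπ⟩ := Finset.mem_filter.1 hπ
      rw [Finset.card_erase_of_mem hxπ]
      have : 1 ≤ π.card := Finset.card_pos.2 ⟨_, hxπ⟩
      congr 1
      omega
  have hA2 : ∑ π ∈ (setPartitions V).filter (fun π => ¬ ({x} : Finset α) ∈ π), mu π.card
      = ∑ π' ∈ setPartitions V', (π'.card : ℝ) * mu π'.card := by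
    have hmaps : ∀ π ∈ (setPartitions V).filter (fun π => ¬ ({x} : Finset α) ∈ π),
        π.image (fun B => B.erase x) ∈ setPartitions V' := by
      intro π hπ
      obtain ⟨hπ, hxπ⟩ := Finset.mem_filter.1 hπ
      obtain ⟨h1', h2', h3'⟩ := mem_setPartitions.1 hπ
      have hBne : ∀ B ∈ π, (B.erase x).Nonempty := by
        intro B hB
        obtain ⟨y, hy⟩ := h1' B hB
        by_cases hyx : y = x
        · subst hyx
          by_contra hemp
          rw [Finset.not_nonempty_iff_eq_empty] at hemp
          have : B ⊆ {y} := by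
            intro z hz
            by_contra hzB
            have : z ∈ B.erase y := Finset.mem_erase.2 ⟨fun h => hzB (by simp [h]), hz⟩
            simp [hemp] at this
          rcases Finset.subset_singleton_iff.1 this with rfl | rfl
          · simp at hy
          · exact hxπ hB
        · exact ⟨y, Finset.mem_erase.2 ⟨hyx, hy⟩⟩
      have hinj : ∀ B₁ ∈ π, ∀ B₂ ∈ π, B₁.erase x = B₂.erase x → B₁ = B₂ := by
        intro B₁ hB₁ B₂ hB₂ heq
        by_cases h1x : x ∈ B₁ <;> by_cases h2x : x ∈ B₂
        · exact block_unique hπ hB₁ hB₂ h1x h2x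
        · obtain ⟨w, hw⟩ := hBne B₁ hB₁
          have hw1 : w ∈ B₁ := Finset.mem_of_mem_erase hw
          have hw2 : w ∈ B₂ := by
            rw [heq] at hw
            exact Finset.mem_of_mem_erase hw
          exact block_unique hπ hB₁ hB₂ hw1 hw2
        · obtain ⟨w, hw⟩ := hBne B₂ hB₂
          have hw2 : w ∈ B₂ := Finset.mem_of_mem_erase hw
          have hw1 : w ∈ B₁ := by
            rw [← heq] at hw
            exact Finset.mem_of_mem_erase hw
          exact block_unique hπ hB₁ hB₂ hw1 hw2
        · rw [Finset.erase_eq_of_notMem h1x, Finset.erase_eq_of_notMem h2x] at heq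
          exact heq
      refine mem_setPartitions.2 ⟨?_, ?_, ?_⟩
      · intro B hB
        obtain ⟨B₀, hB₀, rfl⟩ := Finset.mem_image.1 hB
        exact hBne B₀ hB₀
      · intro B hB B' hB' hne
        obtain ⟨B₀, hB₀, rfl⟩ := Finset.mem_image.1 hB
        obtain ⟨B₀', hB₀', rfl⟩ := Finset.mem_image.1 hB'
        have : B₀ ≠ B₀' := fun h => hne (by rw [h])
        exact Finset.disjoint_of_subset_left (Finset.erase_subset _ _)
          (Finset.disjoint_of_subset_right (Finset.erase_subset _ _) (h2' _ hB₀ _ hB₀' this))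
      · ext y
        simp only [Finset.mem_sup, id]
        constructor
        · rintro ⟨B, hB, hyB⟩
          obtain ⟨B₀, hB₀, rfl⟩ := Finset.mem_image.1 hB
          obtain ⟨hyx, hyB₀⟩ := Finset.mem_erase.1 hyB
          exact Finset.mem_erase.2 ⟨hyx, block_subset hπ hB₀ hyB₀⟩
        · intro hy
          obtain ⟨hyx, hyV⟩ := Finset.mem_erase.1 hy
          obtain ⟨B, hB, hyB⟩ := exists_block hπ hyV
          exact ⟨B.erase x, Finset.mem_image_of_mem _ hB, Finset.mem_erase.2 ⟨hyx, hyB⟩⟩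
    rw [← Finset.sum_fiberwise_of_maps_to hmaps (fun π => mu π.card)]
    refine Finset.sum_congr rfl ?_
    intro π' hπ'
    obtain ⟨hp1, hp2, hp3⟩ := mem_setPartitions.1 hπ'
    have hfiber : ((setPartitions V).filter (fun π => ¬ ({x} : Finset α) ∈ π)).filter
          (fun π => π.image (fun B => B.erase x) = π')
        = π'.image (fun B => insert (insert x B) (π'.erase B)) := by
      ext π
      simp only [Finset.mem_filter, Finset.mem_image]
      constructor
      · rintro ⟨⟨hπ, hxπ⟩, hΨ⟩
        obtain ⟨h1', h2', h3'⟩ := mem_setPartitions.1 hπ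
        obtain ⟨C, hC, hxC⟩ := exists_block hπ hx
        refine ⟨C.erase x, ?_, ?_⟩
        · rw [← hΨ]
          exact Finset.mem_image_of_mem _ hC
        · have hCx : C ≠ {x} := fun h => hxπ (h ▸ hC)
          have hCB : insert x (C.erase x) = C := Finset.insert_erase hxC
          have herase : π'.erase (C.erase x) = π.erase C := by
            ext D
            constructor
            · intro hD
              obtain ⟨hDne, hDπ'⟩ := Finset.mem_erase.1 hD
              rw [← hΨ] at hDπ'
              obtain ⟨B₁, hB₁, rfl⟩ := Finset.mem_image.1 hDπ'
              have hxB₁ : x ∉ B₁ := by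
                intro hxB₁
                exact hDne (by rw [block_unique hπ hB₁ hC hxB₁ hxC])
              rw [Finset.erase_eq_of_notMem hxB₁]
              refine Finset.mem_erase.2 ⟨?_, hB₁⟩
              rintro rfl
              exact hxB₁ hxC
            · intro hD
              obtain ⟨hDne, hDπ⟩ := Finset.mem_erase.1 hD
              have hxD : x ∉ D := fun hxD => hDne (block_unique hπ hDπ hC hxD hxC)
              refine Finset.mem_erase.2 ⟨?_, ?_⟩
              · intro hDeq
                have hCerasene : (C.erase x).Nonempty := by
                  obtain ⟨w, hw, hwx⟩ : ∃ w ∈ C, w ≠ x := by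
                    by_contra hcon
                    push_neg at hcon
                    exact hCx (Finset.eq_singleton_iff_nonempty_unique_mem.2
                      ⟨h1' C hC, hcon⟩)
                  exact ⟨w, Finset.mem_erase.2 ⟨hwx, hw⟩⟩
                obtain ⟨w, hw⟩ := hCerasene
                rw [← hDeq] at hw
                have hwC : w ∈ C := Finset.mem_of_mem_erase (hDeq ▸ hw)
                exact hDne (block_unique hπ hDπ hC hw hwC)
              · rw [← hΨ]
                have : D.erase x = D := Finset.erase_eq_of_notMem hxD
                rw [← this]
                exact Finset.mem_image_of_mem _ hDπ
          rw [hCB, herase, Finset.insert_erase hC]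
      · rintro ⟨B, hB, rfl⟩
        have hxB : x ∉ B := hblocksV' hπ' hB
        have hBne' : B.Nonempty := hp1 B hB
        have hCne : (insert x B) ∉ π'.erase B := by
          intro hmem
          exact hblocksV' hπ' (Finset.mem_of_mem_erase hmem) (Finset.mem_insert_self _ _)
        have hπmem : insert (insert x B) (π'.erase B) ∈ setPartitions V := by
          refine mem_setPartitions.2 ⟨?_, ?_, ?_⟩
          · intro D hD
            rcases Finset.mem_insert.1 hD with rfl | hD
            · exact ⟨x, Finset.mem_insert_self _ _⟩
            · exact hp1 D (Finset.mem_of_mem_erase hD)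
          · intro D hD D' hD' hne
            rw [Finset.disjoint_left]
            intro z hzD hzD'
            rcases Finset.mem_insert.1 hD with hDeq | hDm
            · rcases Finset.mem_insert.1 hD' with hD'eq | hD'm
              · exact hne (hDeq.trans hD'eq.symm)
              · subst hDeq
                rcases Finset.mem_insert.1 hzD with hzx | hzB
                · exact hblocksV' hπ' (Finset.mem_of_mem_erase hD'm) (hzx ▸ hzD')
                · exact Finset.disjoint_left.1
                    (hp2 B hB D' (Finset.mem_of_mem_erase hD'm)
                      (Finset.ne_of_mem_erase hD'm).symm) hzB hzD'
            · rcases Finset.mem_insert.1 hD' with hD'eq | hD'm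
              · subst hD'eq
                rcases Finset.mem_insert.1 hzD' with hzx | hzB
                · exact hblocksV' hπ' (Finset.mem_of_mem_erase hDm) (hzx ▸ hzD)
                · exact Finset.disjoint_left.1
                    (hp2 D (Finset.mem_of_mem_erase hDm) B hB (Finset.ne_of_mem_erase hDm))
                    hzD hzB
              · exact Finset.disjoint_left.1
                  (hp2 D (Finset.mem_of_mem_erase hDm) D' (Finset.mem_of_mem_erase hD'm) hne)
                  hzD hzD'
          · ext y
            simp only [Finset.mem_sup, id]
            constructor
            · rintro ⟨D, hD, hyD⟩
              rcases Finset.mem_insert.1 hD with rfl | hD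
              · rcases Finset.mem_insert.1 hyD with rfl | hyD
                · exact hx
                · exact Finset.mem_of_mem_erase (block_subset hπ' hB hyD)
              · exact Finset.mem_of_mem_erase
                  (block_subset hπ' (Finset.mem_of_mem_erase hD) hyD)
            · intro hy
              by_cases hyx : y = x
              · exact ⟨insert x B, Finset.mem_insert_self _ _, hyx ▸ Finset.mem_insert_self _ _⟩
              · obtain ⟨D, hD, hyD⟩ := exists_block hπ' (Finset.mem_erase.2 ⟨hyx, hy⟩)
                by_cases hDB : D = B
                · exact ⟨insert x B, Finset.mem_insert_self _ _,
                    Finset.mem_insert.2 (Or.inr (hDB ▸ hyD))⟩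
                · exact ⟨D, Finset.mem_insert.2 (Or.inr (Finset.mem_erase.2 ⟨hDB, hD⟩)), hyD⟩
        refine ⟨⟨hπmem, ?_⟩, ?_⟩
        · intro hmem
          rcases Finset.mem_insert.1 hmem with heq | hmem
          · obtain ⟨z, hz⟩ := hBne'
            have : z ∈ ({x} : Finset α) := heq ▸ Finset.mem_insert.2 (Or.inr hz)
            rw [Finset.mem_singleton] at this
            exact hxB (this ▸ hz)
          · exact hxV' (block_subset hπ' (Finset.mem_of_mem_erase hmem)
              (Finset.mem_singleton_self x))
        · rw [Finset.image_insert, Finset.erase_insert hxB]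
          have himg : (π'.erase B).image (fun D => D.erase x) = π'.erase B := by
            have h1 : (π'.erase B).image (fun D => D.erase x) = (π'.erase B).image id :=
              Finset.image_congr (fun D hD => Finset.erase_eq_of_notMem
                (hblocksV' hπ' (Finset.mem_of_mem_erase (Finset.mem_coe.1 hD))))
            rw [h1, Finset.image_id]
          rw [himg, Finset.insert_erase hB]
    rw [hfiber]
    have hinj2 : ∀ B₁ ∈ π', ∀ B₂ ∈ π',
        insert (insert x B₁) (π'.erase B₁) = insert (insert x B₂) (π'.erase B₂) → B₁ = B₂ := by
      intro B₁ hB₁ B₂ hB₂ heq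
      have h1 : insert x B₁ ∈ insert (insert x B₂) (π'.erase B₂) :=
        heq ▸ Finset.mem_insert_self _ _
      rcases Finset.mem_insert.1 h1 with heq' | hmem
      · have hx1 : x ∉ B₁ := hblocksV' hπ' hB₁
        have hx2 : x ∉ B₂ := hblocksV' hπ' hB₂
        rw [← Finset.erase_insert hx1, heq', Finset.erase_insert hx2]
      · exact absurd (hblocksV' hπ' (Finset.mem_of_mem_erase hmem))
          (fun h => h (Finset.mem_insert_self _ _))
    rw [Finset.sum_image hinj2]
    have hterm : ∀ B ∈ π', mu ((insert (insert x B) (π'.erase B)).card) = mu π'.card := by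
      intro B hB
      have hCne : (insert x B) ∉ π'.erase B := by
        intro hmem
        exact hblocksV' hπ' (Finset.mem_of_mem_erase hmem) (Finset.mem_insert_self _ _)
      rw [Finset.card_insert_of_notMem hCne, Finset.card_erase_of_mem hB]
      have : 1 ≤ π'.card := Finset.card_pos.2 ⟨_, hB⟩
      congr 1
      omega
    rw [Finset.sum_congr rfl hterm, Finset.sum_const, nsmul_eq_mul]
  rw [hA1, hA2, ← Finset.sum_add_distrib]
  refine Finset.sum_eq_zero ?_
  intro π' hπ'
  have hk : 1 ≤ π'.card := setPartitions_card_pos hV'ne hπ'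
  obtain ⟨m, hm⟩ : ∃ m, π'.card = m + 1 := ⟨π'.card - 1, by omega⟩
  rw [hm]
  show mu (m + 1 + 1) + ((m + 1 : ℕ) : ℝ) * mu (m + 1) = 0
  unfold mu
  simp only [Nat.add_sub_cancel]
  rw [pow_succ, Nat.factorial_succ]
  push_cast
  ring

end TreeIneq

namespace TreeIneq

variable {α : Type*} [DecidableEq α]

lemma mem_sym2_pair_left {x y : α} : x ∈ s(x, y) := Sym2.mem_mk_left x y

lemma mem_sym2_pair_right {x y : α} : y ∈ s(x, y) := Sym2.mem_mk_right x y

/-- Deletion–contraction recursion for `Qsum`. -/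
lemma Qsum_rec {V : Finset α} {E : Finset (Sym2 α)} {u v : α}
    (heE : s(u, v) ∈ E) (hu : u ∈ V) (hv : v ∈ V) (huv : u ≠ v) :
    Qsum V E = Qsum V (E.erase s(u, v))
      - Qsum (V.erase v) ((E.erase s(u, v)).image (Sym2.map (Function.update id v u))) := by
  classical
  set e := s(u, v) with hedef
  set f := Function.update id v u with hfdef
  have hfv : f v = u := Function.update_self v u id
  have hfx : ∀ x, x ≠ v → f x = x := fun x hx => Function.update_of_ne hx u id
  set E' := (E.erase e).image (Sym2.map f) with hE'def
  have huv' : u ∈ V.erase v := Finset.mem_erase.2 ⟨huv, hu⟩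
  -- split the deleted sum
  have hsplit := Finset.sum_filter_add_sum_filter_not
    ((setPartitions V).filter (fun π => ∀ B ∈ π, Indep (E.erase e) B))
    (fun π => ∃ B ∈ π, u ∈ B ∧ v ∈ B) (fun π => mu π.card)
  -- the non-coblocked part is `Qsum V E`
  have hpart2 : ((setPartitions V).filter (fun π => ∀ B ∈ π, Indep (E.erase e) B)).filter
      (fun π => ¬ ∃ B ∈ π, u ∈ B ∧ v ∈ B)
      = (setPartitions V).filter (fun π => ∀ B ∈ π, Indep E B) := by
    rw [Finset.filter_filter]
    refine Finset.filter_congr ?_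
    intro π hπ
    constructor
    · rintro ⟨hdel, hnco⟩ B hB
      intro g hg hgB
      by_cases hge : g = e
      · exact hnco ⟨B, hB, hgB u (hge ▸ mem_sym2_pair_left), hgB v (hge ▸ mem_sym2_pair_right)⟩
      · exact hdel B hB g (Finset.mem_erase.2 ⟨hge, hg⟩) hgB
    · intro hind
      refine ⟨fun B hB g hg hgB => hind B hB g (Finset.mem_of_mem_erase hg) hgB, ?_⟩
      rintro ⟨B, hB, huB, hvB⟩
      refine hind B hB e heE ?_
      intro z hz
      rcases Sym2.mem_iff.1 hz with rfl | rfl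
      · exact huB
      · exact hvB
  -- the coblocked part is the contracted sum
  have hpart1 : ∑ π ∈ ((setPartitions V).filter
        (fun π => ∀ B ∈ π, Indep (E.erase e) B)).filter
        (fun π => ∃ B ∈ π, u ∈ B ∧ v ∈ B), mu π.card
      = Qsum (V.erase v) E' := by
    unfold Qsum
    refine Finset.sum_nbij' (fun π => π.image (fun B => B.erase v))
      (fun π' => π'.image (fun B => if u ∈ B then insert v B else B)) ?_ ?_ ?_ ?_ ?_
    · -- forward map lands correctly
      intro π hπ
      obtain ⟨hπf, B0, hB0, huB0, hvB0⟩ := Finset.mem_filter.1 hπ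
      obtain ⟨hπ, hdel⟩ := Finset.mem_filter.1 hπf
      obtain ⟨h1', h2', h3'⟩ := mem_setPartitions.1 hπ
      have hinj : ∀ B₁ ∈ π, ∀ B₂ ∈ π, B₁.erase v = B₂.erase v → B₁ = B₂ := by
        intro B₁ hB₁ B₂ hB₂ heq
        by_cases h1v : v ∈ B₁ <;> by_cases h2v : v ∈ B₂
        · exact block_unique hπ hB₁ hB₂ h1v h2v
        · have hB₁0 : B₁ = B0 := block_unique hπ hB₁ hB0 h1v hvB0
          have huB₁ : u ∈ B₁.erase v := Finset.mem_erase.2 ⟨huv, hB₁0 ▸ huB0⟩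
          have huB₂ : u ∈ B₂ := Finset.mem_of_mem_erase (heq ▸ huB₁)
          exact block_unique hπ hB₁ hB₂ (hB₁0 ▸ huB0) huB₂
        · have hB₂0 : B₂ = B0 := block_unique hπ hB₂ hB0 h2v hvB0
          have huB₂ : u ∈ B₂.erase v := Finset.mem_erase.2 ⟨huv, hB₂0 ▸ huB0⟩
          have huB₁ : u ∈ B₁ := Finset.mem_of_mem_erase (heq ▸ huB₂)
          exact block_unique hπ hB₁ hB₂ huB₁ (hB₂0 ▸ huB0)
        · rw [Finset.erase_eq_of_notMem h1v, Finset.erase_eq_of_notMem h2v] at heq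
          exact heq
      refine Finset.mem_filter.2 ⟨mem_setPartitions.2 ⟨?_, ?_, ?_⟩, ?_⟩
      · intro B hB
        obtain ⟨B₀, hB₀, rfl⟩ := Finset.mem_image.1 hB
        by_cases hvB : v ∈ B₀
        · have : B₀ = B0 := block_unique hπ hB₀ hB0 hvB hvB0
          exact ⟨u, Finset.mem_erase.2 ⟨huv, this ▸ huB0⟩⟩
        · rw [Finset.erase_eq_of_notMem hvB]
          exact h1' B₀ hB₀
      · intro B hB B' hB' hne
        obtain ⟨B₀, hB₀, rfl⟩ := Finset.mem_image.1 hB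
        obtain ⟨B₀', hB₀', rfl⟩ := Finset.mem_image.1 hB'
        have : B₀ ≠ B₀' := fun h => hne (by rw [h])
        exact Finset.disjoint_of_subset_left (Finset.erase_subset _ _)
          (Finset.disjoint_of_subset_right (Finset.erase_subset _ _) (h2' _ hB₀ _ hB₀' this))
      · ext y
        simp only [Finset.mem_sup, id]
        constructor
        · rintro ⟨B, hB, hyB⟩
          obtain ⟨B₀, hB₀, rfl⟩ := Finset.mem_image.1 hB
          obtain ⟨hyv, hyB₀⟩ := Finset.mem_erase.1 hyB
          exact Finset.mem_erase.2 ⟨hyv, block_subset hπ hB₀ hyB₀⟩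
        · intro hy
          obtain ⟨hyv, hyV⟩ := Finset.mem_erase.1 hy
          obtain ⟨B, hB, hyB⟩ := exists_block hπ hyV
          exact ⟨B.erase v, Finset.mem_image_of_mem _ hB, Finset.mem_erase.2 ⟨hyv, hyB⟩⟩
      · -- independence of the contracted partition
        intro B' hB' g hg hgB'
        obtain ⟨B, hB, rfl⟩ := Finset.mem_image.1 hB'
        obtain ⟨g₀, hg₀, rfl⟩ := Finset.mem_image.1 hg
        obtain ⟨x, y, rfl⟩ := sym2_exists g₀
        rw [Sym2.map_pair_eq] at hgB'
        have hfxm : f x ∈ B.erase v := hgB' (f x) mem_sym2_pair_left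
        have hfym : f y ∈ B.erase v := hgB' (f y) mem_sym2_pair_right
        have hxy : x ∈ B ∧ y ∈ B := by
          constructor
          · by_cases hxv : x = v
            · have : u ∈ B := by
                rw [hxv, hfv] at hfxm
                exact Finset.mem_of_mem_erase hfxm
              have : B = B0 := block_unique hπ hB hB0 this huB0
              rw [hxv, this]
              exact hvB0
            · rw [hfx x hxv] at hfxm
              exact Finset.mem_of_mem_erase hfxm
          · by_cases hyv : y = v
            · have : u ∈ B := by
                rw [hyv, hfv] at hfym
                exact Finset.mem_of_mem_erase hfym
              have : B = B0 := block_unique hπ hB hB0 this huB0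
              rw [hyv, this]
              exact hvB0
            · rw [hfx y hyv] at hfym
              exact Finset.mem_of_mem_erase hfym
        refine hdel B hB s(x, y) hg₀ ?_
        intro z hz
        rcases Sym2.mem_iff.1 hz with rfl | rfl
        · exact hxy.1
        · exact hxy.2
    · -- backward map lands correctly
      intro π' hπ'
      obtain ⟨hπ', hind'⟩ := Finset.mem_filter.1 hπ'
      obtain ⟨h1', h2', h3'⟩ := mem_setPartitions.1 hπ'
      have hvnot : ∀ B ∈ π', v ∉ B := by
        intro B hB hvB
        exact (Finset.notMem_erase v V) (block_subset hπ' hB hvB)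
      obtain ⟨Bu, hBu, huBu⟩ := exists_block hπ' huv'
      have himgmem : ∀ B ∈ π', ∀ z, z ∈ (if u ∈ B then insert v B else B) ↔
          (z ∈ B ∨ (z = v ∧ u ∈ B)) := by
        intro B hB z
        by_cases huB : u ∈ B
        · simp only [if_pos huB, Finset.mem_insert]
          constructor
          · rintro (rfl | h)
            · exact Or.inr ⟨rfl, huB⟩
            · exact Or.inl h
          · rintro (h | ⟨rfl, _⟩)
            · exact Or.inr h
            · exact Or.inl rfl
        · simp only [if_neg huB]
          constructor
          · exact fun h => Or.inl h
          · rintro (h | ⟨rfl, h⟩)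
            · exact h
            · exact absurd h huB
      refine Finset.mem_filter.2 ⟨Finset.mem_filter.2 ⟨mem_setPartitions.2 ⟨?_, ?_, ?_⟩, ?_⟩, ?_⟩
      · intro B hB
        obtain ⟨B₀, hB₀, rfl⟩ := Finset.mem_image.1 hB
        obtain ⟨z, hz⟩ := h1' B₀ hB₀
        exact ⟨z, (himgmem B₀ hB₀ z).2 (Or.inl hz)⟩
      · intro B hB B' hB' hne
        obtain ⟨B₀, hB₀, rfl⟩ := Finset.mem_image.1 hB
        obtain ⟨B₀', hB₀', rfl⟩ := Finset.mem_image.1 hB'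
        have hne₀ : B₀ ≠ B₀' := fun h => hne (by rw [h])
        rw [Finset.disjoint_left]
        intro z hz hz'
        rcases (himgmem B₀ hB₀ z).1 hz with hzB | ⟨hzv, huB₀⟩
        · rcases (himgmem B₀' hB₀' z).1 hz' with hzB' | ⟨hzv', _⟩
          · exact Finset.disjoint_left.1 (h2' _ hB₀ _ hB₀' hne₀) hzB hzB'
          · exact hvnot B₀ hB₀ (hzv' ▸ hzB)
        · rcases (himgmem B₀' hB₀' z).1 hz' with hzB' | ⟨_, huB₀'⟩
          · exact hvnot B₀' hB₀' (hzv ▸ hzB')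
          · exact hne₀ (block_unique hπ' hB₀ hB₀' huB₀ huB₀')
      · ext y
        simp only [Finset.mem_sup, id]
        constructor
        · rintro ⟨B, hB, hyB⟩
          obtain ⟨B₀, hB₀, rfl⟩ := Finset.mem_image.1 hB
          rcases (himgmem B₀ hB₀ y).1 hyB with hyB₀ | ⟨hyv, _⟩
          · exact Finset.mem_of_mem_erase (block_subset hπ' hB₀ hyB₀)
          · rw [hyv]; exact hv
        · intro hy
          by_cases hyv : y = v
          · refine ⟨if u ∈ Bu then insert v Bu else Bu, Finset.mem_image_of_mem _ hBu, ?_⟩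
            exact (himgmem Bu hBu y).2 (Or.inr ⟨hyv, huBu⟩)
          · obtain ⟨B, hB, hyB⟩ := exists_block hπ' (Finset.mem_erase.2 ⟨hyv, hy⟩)
            exact ⟨_, Finset.mem_image_of_mem _ hB, (himgmem B hB y).2 (Or.inl hyB)⟩
      · -- independence w.r.t. `E.erase e`
        intro B hB g hg hgB
        obtain ⟨B₀, hB₀, rfl⟩ := Finset.mem_image.1 hB
        obtain ⟨x, y, rfl⟩ := sym2_exists g
        have hxm : x ∈ (if u ∈ B₀ then insert v B₀ else B₀) := hgB x mem_sym2_pair_left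
        have hym : y ∈ (if u ∈ B₀ then insert v B₀ else B₀) := hgB y mem_sym2_pair_right
        have hfmem : ∀ z, z ∈ (if u ∈ B₀ then insert v B₀ else B₀) → f z ∈ B₀ := by
          intro z hz
          rcases (himgmem B₀ hB₀ z).1 hz with hzB | ⟨hzv, huB₀⟩
          · rw [hfx z (fun h => hvnot B₀ hB₀ (h ▸ hzB))]
            exact hzB
          · rw [hzv, hfv]
            exact huB₀
        refine hind' B₀ hB₀ (Sym2.map f s(x, y)) (Finset.mem_image_of_mem _ hg) ?_
        rw [Sym2.map_pair_eq]
        intro z hz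
        rcases Sym2.mem_iff.1 hz with rfl | rfl
        · exact hfmem x hxm
        · exact hfmem y hym
      · -- coblocked
        refine ⟨if u ∈ Bu then insert v Bu else Bu, Finset.mem_image_of_mem _ hBu,
          (himgmem Bu hBu u).2 (Or.inl huBu), (himgmem Bu hBu v).2 (Or.inr ⟨rfl, huBu⟩)⟩
    · -- left inverse
      intro π hπ
      obtain ⟨hπf, B0, hB0, huB0, hvB0⟩ := Finset.mem_filter.1 hπ
      obtain ⟨hπ', _⟩ := Finset.mem_filter.1 hπf
      rw [Finset.image_image]
      have : ∀ B ∈ π, (fun B => if u ∈ B then insert v B else B) ((fun B => B.erase v) B)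
          = id B := by
        intro B hB
        simp only [Function.comp, id]
        by_cases hvB : v ∈ B
        · have hBB0 : B = B0 := block_unique hπ' hB hB0 hvB hvB0
          have huBe : u ∈ B.erase v := Finset.mem_erase.2 ⟨huv, hBB0 ▸ huB0⟩
          rw [if_pos huBe, Finset.insert_erase hvB]
        · rw [Finset.erase_eq_of_notMem hvB]
          by_cases huB : u ∈ B
          · exact absurd (block_unique hπ' hB hB0 huB huB0 ▸ hvB0) hvB
          · rw [if_neg huB]
      calc π.image ((fun B => if u ∈ B then insert v B else B) ∘ (fun B => B.erase v))
          = π.image id := Finset.image_congr (fun B hB => this B (Finset.mem_coe.1 hB))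
        _ = π := Finset.image_id
    · -- right inverse
      intro π' hπ'
      obtain ⟨hπ', _⟩ := Finset.mem_filter.1 hπ'
      have hvnot : ∀ B ∈ π', v ∉ B := by
        intro B hB hvB
        exact (Finset.notMem_erase v V) (block_subset hπ' hB hvB)
      rw [Finset.image_image]
      have : ∀ B ∈ π', (fun B => B.erase v) ((fun B => if u ∈ B then insert v B else B) B)
          = id B := by
        intro B hB
        simp only [Function.comp, id]
        by_cases huB : u ∈ B
        · rw [if_pos huB, Finset.erase_insert (hvnot B hB)]
        · rw [if_neg huB, Finset.erase_eq_of_notMem (hvnot B hB)]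
      calc π'.image ((fun B => B.erase v) ∘ (fun B => if u ∈ B then insert v B else B))
          = π'.image id := Finset.image_congr (fun B hB => this B (Finset.mem_coe.1 hB))
        _ = π' := Finset.image_id
    · -- cardinalities agree
      intro π hπ
      obtain ⟨hπf, B0, hB0, huB0, hvB0⟩ := Finset.mem_filter.1 hπ
      obtain ⟨hπ', _⟩ := Finset.mem_filter.1 hπf
      congr 1
      refine (Finset.card_image_of_injOn ?_).symm
      intro B₁ hB₁ B₂ hB₂ heq
      have heq : B₁.erase v = B₂.erase v := heq
      have hB₁' := Finset.mem_coe.1 hB₁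
      have hB₂' := Finset.mem_coe.1 hB₂
      by_cases h1v : v ∈ B₁ <;> by_cases h2v : v ∈ B₂
      · exact block_unique hπ' hB₁' hB₂' h1v h2v
      · have hB₁0 : B₁ = B0 := block_unique hπ' hB₁' hB0 h1v hvB0
        have huB₁ : u ∈ B₁.erase v := Finset.mem_erase.2 ⟨huv, hB₁0 ▸ huB0⟩
        have huB₂ : u ∈ B₂ := Finset.mem_of_mem_erase (heq ▸ huB₁)
        exact block_unique hπ' hB₁' hB₂' (hB₁0 ▸ huB0) huB₂
      · have hB₂0 : B₂ = B0 := block_unique hπ' hB₂' hB0 h2v hvB0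
        have huB₂ : u ∈ B₂.erase v := Finset.mem_erase.2 ⟨huv, hB₂0 ▸ huB0⟩
        have huB₁ : u ∈ B₁ := Finset.mem_of_mem_erase (heq ▸ huB₂)
        exact block_unique hπ' hB₁' hB₂' huB₁ (hB₂0 ▸ huB0)
      · rw [Finset.erase_eq_of_notMem h1v, Finset.erase_eq_of_notMem h2v] at heq
        exact heq
  -- assemble
  have : Qsum V (E.erase e) = Qsum (V.erase v) E' + Qsum V E := by
    unfold Qsum
    rw [← hsplit, hpart1, hpart2]
    unfold Qsum
    ring
  rw [this]
  ring

end TreeIneq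

namespace TreeIneq

variable {α : Type*} [DecidableEq α]

lemma sym2_map_isDiag {f : α → α} {g : Sym2 α} (h : g.IsDiag) : (Sym2.map f g).IsDiag := by
  obtain ⟨x, y, rfl⟩ := sym2_exists g
  rw [Sym2.mk_isDiag_iff] at h
  rw [Sym2.map_pair_eq, Sym2.mk_isDiag_iff, h]

/-- Deletion–contraction superadditivity for the spanning tree count. -/
lemma tcount_rec {V : Finset α} {E : Finset (Sym2 α)} {u v : α}
    (heE : s(u, v) ∈ E) (hE : ∀ g ∈ E, ∀ x ∈ g, x ∈ V) (hu : u ∈ V) (hv : v ∈ V)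
    (huv : u ≠ v) :
    tcount V (E.erase s(u, v)) +
      tcount (V.erase v) ((E.erase s(u, v)).image (Sym2.map (Function.update id v u)))
      ≤ tcount V E := by
  classical
  set e := s(u, v) with hedef
  set f := Function.update id v u with hfdef
  have hfv : f v = u := Function.update_self v u id
  have hfx : ∀ x, x ≠ v → f x = x := fun x hx => Function.update_of_ne hx u id
  set E' := (E.erase e).image (Sym2.map f) with hE'def
  set A := (E.erase e).powerset.filter (fun T => IsSpTree V T) with hA
  set B := E'.powerset.filter (fun T => IsSpTree (V.erase v) T) with hB
  set C := E.powerset.filter (fun T => IsSpTree V T) with hC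
  set g : Sym2 α → Sym2 α :=
    fun y => if h : ∃ z ∈ E.erase e, Sym2.map f z = y then h.choose else y with hgdef
  have hg : ∀ y ∈ E', g y ∈ E.erase e ∧ Sym2.map f (g y) = y := by
    intro y hy
    obtain ⟨z, hz, hzy⟩ := Finset.mem_image.1 hy
    have hex : ∃ z ∈ E.erase e, Sym2.map f z = y := ⟨z, hz, hzy⟩
    rw [hgdef]
    simp only [dif_pos hex]
    exact hex.choose_spec
  set h : Finset (Sym2 α) → Finset (Sym2 α) := fun T' => insert e (T'.image g) with hhdef
  have hmem : ∀ T' ∈ B, h T' ∈ C := by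
    intro T' hT'
    obtain ⟨hT'sub, hnd, hep, hconn, hcard⟩ := Finset.mem_filter.1 hT'
    rw [Finset.mem_powerset] at hT'sub
    have hgmem : ∀ y ∈ T', g y ∈ E.erase e ∧ Sym2.map f (g y) = y :=
      fun y hy => hg y (hT'sub hy)
    have himgsub : T'.image g ⊆ E.erase e := by
      intro z hz
      obtain ⟨y, hy, rfl⟩ := Finset.mem_image.1 hz
      exact (hgmem y hy).1
    have henotin : e ∉ T'.image g := by
      intro hmem
      obtain ⟨y, hy, hgy⟩ := Finset.mem_image.1 hmem
      exact Finset.notMem_erase e E (hgy ▸ (hgmem y hy).1)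
    have hLink : ∀ w, Reach (h T') w (f w) := by
      intro w
      by_cases hw : w = v
      · rw [hw, hfv]
        refine Relation.ReflTransGen.single ?_
        show s(v, u) ∈ h T'
        rw [Sym2.eq_swap]
        exact Finset.mem_insert_self _ _
      · rw [hfx w hw]
    have hstepmem : ∀ y ∈ T', g y ∈ h T' := by
      intro y hy
      exact Finset.mem_insert_of_mem (Finset.mem_image_of_mem _ hy)
    have hlift : ∀ a b, Reach T' a b → Reach (h T') a b := by
      intro a b hr
      induction hr with
      | refl => exact Relation.ReflTransGen.refl
      | tail hab hstep ih =>
        rename_i b' c'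
        obtain ⟨p, q, hpq⟩ := sym2_exists (g s(b', c'))
        have hmap : Sym2.map f (g s(b', c')) = s(b', c') := (hgmem _ hstep).2
        rw [hpq, Sym2.map_pair_eq] at hmap
        have hpqmem : s(p, q) ∈ h T' := hpq ▸ hstepmem _ hstep
        rcases Sym2.eq_iff.1 hmap with ⟨hp, hq⟩ | ⟨hp, hq⟩
        · refine ih.trans ?_
          refine Relation.ReflTransGen.trans (hp ▸ reach_symm (hLink p)) ?_
          refine Relation.ReflTransGen.trans (Relation.ReflTransGen.single hpqmem) ?_
          exact hq ▸ hLink q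
        · refine ih.trans ?_
          refine Relation.ReflTransGen.trans (hq ▸ reach_symm (hLink q)) ?_
          have : s(q, p) ∈ h T' := Sym2.eq_swap ▸ hpqmem
          refine Relation.ReflTransGen.trans (Relation.ReflTransGen.single this) ?_
          exact hp ▸ hLink p
    have hfVmem : ∀ a, a ∈ V → f a ∈ V.erase v := by
      intro a ha
      by_cases hav : a = v
      · rw [hav, hfv]
        exact Finset.mem_erase.2 ⟨huv, hu⟩
      · rw [hfx a hav]
        exact Finset.mem_erase.2 ⟨hav, ha⟩
    refine Finset.mem_filter.2 ⟨Finset.mem_powerset.2 ?_, ?_, ?_, ?_, ?_⟩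
    · intro z hz
      rcases Finset.mem_insert.1 hz with rfl | hz
      · exact heE
      · exact Finset.mem_of_mem_erase (himgsub hz)
    · intro z hz
      rcases Finset.mem_insert.1 hz with rfl | hz
      · rw [hedef, Sym2.mk_isDiag_iff]
        exact huv
      · obtain ⟨y, hy, rfl⟩ := Finset.mem_image.1 hz
        intro hdiag
        have := sym2_map_isDiag (f := f) hdiag
        rw [(hgmem y hy).2] at this
        exact hnd y hy this
    · intro z hz x hx
      rcases Finset.mem_insert.1 hz with rfl | hz
      · rcases Sym2.mem_iff.1 hx with rfl | rfl
        · exact hu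
        · exact hv
      · exact hE z (Finset.mem_of_mem_erase (himgsub hz)) x hx
    · intro a ha b hb
      have h1 := hLink a
      have h2 := hlift _ _ (hconn (f a) (hfVmem a ha) (f b) (hfVmem b hb))
      have h3 := reach_symm (hLink b)
      exact (h1.trans h2).trans h3
    · rw [Finset.card_insert_of_notMem henotin]
      have himgcard : (T'.image g).card = T'.card := by
        refine Finset.card_image_of_injOn ?_
        intro y₁ hy₁ y₂ hy₂ heq
        have e1 := (hgmem y₁ (Finset.mem_coe.1 hy₁)).2
        have e2 := (hgmem y₂ (Finset.mem_coe.1 hy₂)).2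
        rw [← e1, ← e2, heq]
      rw [himgcard]
      have hvV : (V.erase v).card = V.card - 1 := Finset.card_erase_of_mem hv
      have : 1 ≤ V.card := Finset.card_pos.2 ⟨v, hv⟩
      omega
  have hinj : ∀ T₁ ∈ B, ∀ T₂ ∈ B, h T₁ = h T₂ → T₁ = T₂ := by
    have hrecover : ∀ T' ∈ B, ((h T').erase e).image (Sym2.map f) = T' := by
      intro T' hT'
      obtain ⟨hT'sub, -⟩ := Finset.mem_filter.1 hT'
      rw [Finset.mem_powerset] at hT'sub
      have henotin : e ∉ T'.image g := by
        intro hmem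
        obtain ⟨y, hy, hgy⟩ := Finset.mem_image.1 hmem
        exact Finset.notMem_erase e E (hgy ▸ (hg y (hT'sub hy)).1)
      rw [hhdef]
      dsimp only
      rw [Finset.erase_insert henotin, Finset.image_image]
      calc T'.image (Sym2.map f ∘ g) = T'.image id :=
            Finset.image_congr (fun y hy => (hg y (hT'sub (Finset.mem_coe.1 hy))).2)
        _ = T' := Finset.image_id
    intro T₁ h₁ T₂ h₂ heq
    rw [← hrecover T₁ h₁, ← hrecover T₂ h₂, heq]
  have hdisj : Disjoint A (B.image h) := by
    rw [Finset.disjoint_left]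
    intro T hTA hTB
    obtain ⟨hTsub, -⟩ := Finset.mem_filter.1 hTA
    rw [Finset.mem_powerset] at hTsub
    obtain ⟨T', hT', rfl⟩ := Finset.mem_image.1 hTB
    exact Finset.notMem_erase e E (hTsub (Finset.mem_insert_self _ _))
  have hsubset : A ∪ B.image h ⊆ C := by
    intro T hT
    rcases Finset.mem_union.1 hT with hT | hT
    · obtain ⟨hTsub, hTtree⟩ := Finset.mem_filter.1 hT
      rw [Finset.mem_powerset] at hTsub
      exact Finset.mem_filter.2 ⟨Finset.mem_powerset.2
        (hTsub.trans (Finset.erase_subset _ _)), hTtree⟩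
    · obtain ⟨T', hT', rfl⟩ := Finset.mem_image.1 hT
      exact hmem T' hT'
  have hcalc : A.card + B.card ≤ C.card := by
    have h1 : (B.image h).card = B.card := Finset.card_image_of_injOn
      (fun T₁ h₁ T₂ h₂ => hinj T₁ (Finset.mem_coe.1 h₁) T₂ (Finset.mem_coe.1 h₂))
    calc A.card + B.card = A.card + (B.image h).card := by rw [h1]
      _ = (A ∪ B.image h).card := (Finset.card_union_of_disjoint hdisj).symm
      _ ≤ C.card := Finset.card_le_card hsubset
  exact hcalc

end TreeIneq

namespace TreeIneq

variable {α : Type*} [DecidableEq α]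

lemma Qsum_empty (V : Finset α) (hV : V.Nonempty) :
    Qsum V (∅ : Finset (Sym2 α)) = if V.card = 1 then 1 else 0 := by
  unfold Qsum
  have h : (setPartitions V).filter (fun π => ∀ B ∈ π, Indep (∅ : Finset (Sym2 α)) B)
      = setPartitions V :=
    Finset.filter_true_of_mem (fun π _ B _ g hg => absurd hg (Finset.notMem_empty g))
  rw [h]
  exact sum_mu_setPartitions V hV

lemma tcount_singleton {V : Finset α} (hV : V.card = 1) (E : Finset (Sym2 α)) :
    1 ≤ tcount V E := by
  refine Finset.card_pos.2 ⟨∅, Finset.mem_filter.2 ⟨Finset.mem_powerset.2 (Finset.empty_subset E),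
    ?_, ?_, ?_, ?_⟩⟩
  · intro e he; exact absurd he (Finset.notMem_empty e)
  · intro e he; exact absurd he (Finset.notMem_empty e)
  · intro a ha b hb
    rw [Finset.card_le_one.1 hV.le a ha b hb]
  · rw [Finset.card_empty, hV]

lemma master_base {E : Finset (Sym2 α)} (hE : E = ∅) (V : Finset α) (hV : V.Nonempty) :
    |Qsum V E| ≤ (tcount V E : ℝ) := by
  subst hE
  rw [Qsum_empty V hV]
  by_cases h1 : V.card = 1
  · rw [if_pos h1, abs_one]
    exact_mod_cast tcount_singleton h1 ∅
  · rw [if_neg h1, abs_zero]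
    exact Nat.cast_nonneg _

lemma Qsum_diag {V : Finset α} {E : Finset (Sym2 α)} {e : Sym2 α} (he : e ∈ E)
    (hd : e.IsDiag) (hEV : ∀ g ∈ E, ∀ x ∈ g, x ∈ V) : Qsum V E = 0 := by
  obtain ⟨a, b, rfl⟩ := sym2_exists e
  have hab : a = b := Sym2.mk_isDiag_iff.1 hd
  unfold Qsum
  rw [Finset.filter_false_of_mem, Finset.sum_empty]
  intro π hπ hind
  have haV : a ∈ V := hEV _ he a mem_sym2_pair_left
  obtain ⟨B, hB, haB⟩ := exists_block hπ haV
  refine hind B hB s(a, b) he ?_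
  intro z hz
  rcases Sym2.mem_iff.1 hz with rfl | rfl
  · exact haB
  · exact hab ▸ haB

lemma master : ∀ (N : ℕ) (E : Finset (Sym2 α)), E.card ≤ N → ∀ V : Finset α, V.Nonempty →
    (∀ g ∈ E, ∀ x ∈ g, x ∈ V) → |Qsum V E| ≤ (tcount V E : ℝ) := by
  intro N
  induction N with
  | zero =>
    intro E hEc V hV _
    exact master_base (Finset.card_eq_zero.1 (Nat.le_zero.1 hEc)) V hV
  | succ N ih =>
    intro E hEc V hV hEV
    rcases Finset.eq_empty_or_nonempty E with rfl | ⟨e, he⟩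
    · exact master_base rfl V hV
    by_cases hd : e.IsDiag
    · rw [Qsum_diag he hd hEV, abs_zero]
      exact Nat.cast_nonneg _
    obtain ⟨u, v, rfl⟩ := sym2_exists e
    have huv : u ≠ v := fun h => hd (Sym2.mk_isDiag_iff.2 h)
    have hu : u ∈ V := hEV _ he u mem_sym2_pair_left
    have hv : v ∈ V := hEV _ he v mem_sym2_pair_right
    set f := Function.update id v u with hfdef
    have hfv : f v = u := Function.update_self v u id
    have hfx : ∀ x, x ≠ v → f x = x := fun x hx => Function.update_of_ne hx u id
    set E' := (E.erase s(u, v)).image (Sym2.map f) with hE'def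
    have hdelc : (E.erase s(u, v)).card = E.card - 1 := Finset.card_erase_of_mem he
    have hEpos : 1 ≤ E.card := Finset.card_pos.2 ⟨_, he⟩
    have h1 : |Qsum V (E.erase s(u, v))| ≤ (tcount V (E.erase s(u, v)) : ℝ) := by
      refine ih _ (by omega) V hV ?_
      intro g hg x hx
      exact hEV g (Finset.mem_of_mem_erase hg) x hx
    have h2 : |Qsum (V.erase v) E'| ≤ (tcount (V.erase v) E' : ℝ) := by
      refine ih _ ?_ (V.erase v) ⟨u, Finset.mem_erase.2 ⟨huv, hu⟩⟩ ?_
      · have : E'.card ≤ (E.erase s(u, v)).card := Finset.card_image_le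
        omega
      · intro g hg x hx
        obtain ⟨g₀, hg₀, rfl⟩ := Finset.mem_image.1 hg
        obtain ⟨p, q, rfl⟩ := sym2_exists g₀
        rw [Sym2.map_pair_eq] at hx
        have hmem : ∀ w, w ∈ s(p, q) → f w ∈ V.erase v := by
          intro w hw
          have hwV : w ∈ V := hEV _ (Finset.mem_of_mem_erase hg₀) w hw
          by_cases hwv : w = v
          · rw [hwv, hfv]
            exact Finset.mem_erase.2 ⟨huv, hu⟩
          · rw [hfx w hwv]
            exact Finset.mem_erase.2 ⟨hwv, hwV⟩
        rcases Sym2.mem_iff.1 hx with rfl | rfl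
        · exact hmem p mem_sym2_pair_left
        · exact hmem q mem_sym2_pair_right
    rw [Qsum_rec he hu hv huv]
    calc |Qsum V (E.erase s(u, v)) - Qsum (V.erase v) E'|
        ≤ |Qsum V (E.erase s(u, v))| + |Qsum (V.erase v) E'| := abs_sub _ _
      _ ≤ (tcount V (E.erase s(u, v)) : ℝ) + (tcount (V.erase v) E' : ℝ) := by
          exact add_le_add h1 h2
      _ ≤ (tcount V E : ℝ) := by
          exact_mod_cast tcount_rec he hEV hu hv huv

end TreeIneq

namespace TreeIneq

variable {α : Type*} [DecidableEq α]

lemma reach_avoid {T : Finset (Sym2 α)} {u v : α} (hpath : Reach (T.erase s(u, v)) u v)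
    {a b : α} (h : Reach T a b) : Reach (T.erase s(u, v)) a b := by
  induction h with
  | refl => exact Relation.ReflTransGen.refl
  | tail hab hstep ih =>
    rename_i b' c'
    by_cases heq : s(b', c') = s(u, v)
    · rcases Sym2.eq_iff.1 heq with ⟨hb, hc⟩ | ⟨hb, hc⟩
      · exact ih.trans (by rw [hb, hc]; exact hpath)
      · exact ih.trans (by rw [hb, hc]; exact reach_symm hpath)
    · exact ih.tail (Finset.mem_erase.2 ⟨heq, hstep⟩)

lemma reach_to_reachable {T : Finset (Sym2 α)} {a b : α} (h : Reach T a b) :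
    (SimpleGraph.fromEdgeSet (↑T : Set (Sym2 α))).Reachable a b := by
  induction h with
  | refl => exact SimpleGraph.Reachable.refl a
  | tail hab hstep ih =>
    rename_i b' c'
    by_cases hne : b' = c'
    · exact hne ▸ ih
    · exact ih.trans (SimpleGraph.Adj.reachable
        ((SimpleGraph.fromEdgeSet_adj _).2 ⟨Finset.mem_coe.2 hstep, hne⟩))

end TreeIneq

theorem tree_inequality (n : ℕ) (hn : 1 ≤ n) (r : Fin n → Fin n → Prop) (hr : Symmetric r) :
    |cumulantFamily (disconnectionIndicator r) (Finset.univ : Finset (Fin n))| ≤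
      (Nat.card {T : SimpleGraph (Fin n) // T.IsTree ∧ ∀ i j : Fin n, T.Adj i j → r i j} : ℝ) := by
  classical
  haveI : Nonempty (Fin n) := ⟨⟨0, hn⟩⟩
  set E₀ : Finset (Sym2 (Fin n)) :=
    Finset.univ.filter (fun e => ¬ e.IsDiag ∧ ∀ x ∈ e, ∀ y ∈ e, x ≠ y → r x y) with hE₀def
  have hE₀mem : ∀ a b : Fin n, s(a, b) ∈ E₀ ↔ a ≠ b ∧ r a b := by
    intro a b
    rw [hE₀def, Finset.mem_filter]
    constructor
    · rintro ⟨-, hnd, hall⟩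
      have hab : a ≠ b := fun h => hnd (Sym2.mk_isDiag_iff.2 h)
      exact ⟨hab, hall a TreeIneq.mem_sym2_pair_left b TreeIneq.mem_sym2_pair_right hab⟩
    · rintro ⟨hab, hrab⟩
      refine ⟨Finset.mem_univ _, fun h => hab (Sym2.mk_isDiag_iff.1 h), ?_⟩
      intro x hx y hy hxy
      rcases Sym2.mem_iff.1 hx with rfl | rfl <;> rcases Sym2.mem_iff.1 hy with rfl | rfl
      · exact absurd rfl hxy
      · exact hrab
      · exact hr hrab
      · exact absurd rfl hxy
  -- blockwise independence matches the disconnection condition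
  have hpred : ∀ B : Finset (Fin n),
      ((∀ i ∈ B, ∀ j ∈ B, i ≠ j → ¬ r i j) ↔ TreeIneq.Indep E₀ B) := by
    intro B
    constructor
    · intro hp g hg hgB
      obtain ⟨a, b, rfl⟩ := TreeIneq.sym2_exists g
      obtain ⟨hab, hrab⟩ := (hE₀mem a b).1 hg
      exact hp a (hgB a TreeIneq.mem_sym2_pair_left) b (hgB b TreeIneq.mem_sym2_pair_right)
        hab hrab
    · intro hind i hi j hj hij hrij
      refine hind s(i, j) ((hE₀mem i j).2 ⟨hij, hrij⟩) ?_
      intro z hz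
      rcases Sym2.mem_iff.1 hz with rfl | rfl
      · exact hi
      · exact hj
  -- identify the cumulant with Qsum
  have hcum : cumulantFamily (disconnectionIndicator r) (Finset.univ : Finset (Fin n))
      = TreeIneq.Qsum Finset.univ E₀ := by
    unfold cumulantFamily TreeIneq.Qsum
    rw [Finset.sum_filter]
    refine Finset.sum_congr rfl ?_
    intro π hπ
    by_cases hall : ∀ B ∈ π, TreeIneq.Indep E₀ B
    · rw [if_pos hall]
      have hprod : ∏ B ∈ π, disconnectionIndicator r B = 1 := by
        refine Finset.prod_eq_one ?_
        intro B hB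
        unfold disconnectionIndicator
        rw [if_pos ((hpred B).2 (hall B hB))]
      rw [hprod, mul_one]
      rfl
    · rw [if_neg hall]
      push_neg at hall
      obtain ⟨B, hB, hBind⟩ := hall
      have : disconnectionIndicator r B = 0 := by
        unfold disconnectionIndicator
        rw [if_neg (fun h => hBind ((hpred B).1 h))]
      rw [Finset.prod_eq_zero hB this, mul_zero]
  -- the master inequality
  have hEV : ∀ g ∈ E₀, ∀ x ∈ g, x ∈ (Finset.univ : Finset (Fin n)) :=
    fun g _ x _ => Finset.mem_univ x
  have hmaster := TreeIneq.master E₀.card E₀ le_rfl Finset.univ Finset.univ_nonempty hEV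
  rw [hcum]
  refine hmaster.trans ?_
  rw [Nat.cast_le]
  -- injection from spanning trees (as edge sets) into the subtype of tree graphs
  set F := (E₀.powerset.filter (fun T => TreeIneq.IsSpTree Finset.univ T)) with hFdef
  have hmap : ∀ T ∈ F, (SimpleGraph.fromEdgeSet (↑T : Set (Sym2 (Fin n)))).IsTree ∧
      ∀ i j : Fin n, (SimpleGraph.fromEdgeSet (↑T : Set (Sym2 (Fin n)))).Adj i j → r i j := by
    intro T hT
    obtain ⟨hTsub, hnd, hep, hconn, hcard⟩ := Finset.mem_filter.1 hT
    rw [Finset.mem_powerset] at hTsub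
    set G := SimpleGraph.fromEdgeSet (↑T : Set (Sym2 (Fin n))) with hGdef
    have hadj : ∀ a b : Fin n, G.Adj a b → s(a, b) ∈ T ∧ a ≠ b := by
      intro a b hab
      rw [hGdef, SimpleGraph.fromEdgeSet_adj _] at hab
      exact ⟨Finset.mem_coe.1 hab.1, hab.2⟩
    have hr' : ∀ i j : Fin n, G.Adj i j → r i j := by
      intro i j hij
      obtain ⟨hmem, hne⟩ := hadj i j hij
      exact ((hE₀mem i j).1 (hTsub hmem)).2
    have hconn' : G.Connected := by
      rw [SimpleGraph.connected_iff]
      refine ⟨?_, inferInstance⟩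
      intro a b
      exact TreeIneq.reach_to_reachable (hconn a (Finset.mem_univ a) b (Finset.mem_univ b))
    have hacyc : G.IsAcyclic := by
      rw [SimpleGraph.isAcyclic_iff_forall_adj_isBridge]
      intro a b hab
      rw [SimpleGraph.isBridge_iff]
      intro hreach
      obtain ⟨habT, habne⟩ := hadj a b hab
      rw [SimpleGraph.reachable_iff_reflTransGen] at hreach
      have hstep : ∀ x y : Fin n, (G \ SimpleGraph.fromEdgeSet {s(a, b)}).Adj x y →
          TreeIneq.stepRel (T.erase s(a, b)) x y := by
        intro x y hxy
        rw [SimpleGraph.sdiff_adj] at hxy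
        obtain ⟨hxy1, hxy2⟩ := hxy
        obtain ⟨hxyT, hxyne⟩ := hadj x y hxy1
        have : s(x, y) ≠ s(a, b) := by
          intro h
          exact hxy2 ((SimpleGraph.fromEdgeSet_adj _).2 ⟨h ▸ rfl, hxyne⟩)
        exact Finset.mem_erase.2 ⟨this, hxyT⟩
      have hpath : TreeIneq.Reach (T.erase s(a, b)) a b :=
        Relation.ReflTransGen.mono hstep _ _ hreach
      have hconn2 : TreeIneq.Connects Finset.univ (T.erase s(a, b)) := by
        intro c hc d hd
        exact TreeIneq.reach_avoid hpath (hconn c hc d hd)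
      have hYcard := TreeIneq.connects_card (T.erase s(a, b)).card (T.erase s(a, b)) le_rfl
        Finset.univ hconn2
      rw [Finset.card_erase_of_mem habT] at hYcard
      have hTpos : 1 ≤ T.card := Finset.card_pos.2 ⟨_, habT⟩
      have h5 : (Finset.univ : Finset (Fin n)).card = n := by simp
      omega
    exact ⟨⟨hconn', hacyc⟩, hr'⟩
  -- conclude via an injection
  have hinj : ∀ T₁ ∈ F, ∀ T₂ ∈ F,
      SimpleGraph.fromEdgeSet (↑T₁ : Set (Sym2 (Fin n)))
        = SimpleGraph.fromEdgeSet (↑T₂ : Set (Sym2 (Fin n))) → T₁ = T₂ := by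
    intro T₁ h₁ T₂ h₂ heq
    have hnd₁ := (Finset.mem_filter.1 h₁).2.1
    have hnd₂ := (Finset.mem_filter.1 h₂).2.1
    have hES := congrArg SimpleGraph.edgeSet heq
    rw [SimpleGraph.edgeSet_fromEdgeSet, SimpleGraph.edgeSet_fromEdgeSet] at hES
    have hset : (↑T₁ : Set (Sym2 (Fin n))) = ↑T₂ := by
      ext z
      constructor
      · intro hz
        have : z ∈ (↑T₁ : Set (Sym2 (Fin n))) \ Sym2.diagSet :=
          ⟨hz, hnd₁ z (Finset.mem_coe.1 hz)⟩
        rw [hES] at this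
        exact this.1
      · intro hz
        have : z ∈ (↑T₂ : Set (Sym2 (Fin n))) \ Sym2.diagSet :=
          ⟨hz, hnd₂ z (Finset.mem_coe.1 hz)⟩
        rw [← hES] at this
        exact this.1
    exact Finset.coe_injective hset
  -- cardinality comparison
  haveI : Fintype {T : SimpleGraph (Fin n) // T.IsTree ∧ ∀ i j : Fin n, T.Adj i j → r i j} :=
    Fintype.ofFinite _
  rw [Nat.card_eq_fintype_card]
  have : TreeIneq.tcount (Finset.univ : Finset (Fin n)) E₀ = Fintype.card F :=
    (Fintype.card_coe F).symm
  rw [this]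
  exact Fintype.card_le_of_injective
    (fun T => ⟨SimpleGraph.fromEdgeSet (↑(T : Finset (Sym2 (Fin n))) : Set (Sym2 (Fin n))),
      hmap T T.2⟩)
    (by
      intro T₁ T₂ h
      have := congrArg Subtype.val h
      exact Subtype.ext (hinj T₁ T₁.2 T₂ T₂.2 this))
end
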